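/- arXiv:2101.05594 — 10 statements merged into one kernel-verified Lean document; each statement's English description precedes it below -/
import Mathlib

section
/- Let X be a real vector space of dimension exactly 2 and let γ be a gauge on X. Then γ is a norm (i.e., additionally γ(−x) = γ(x) for all x ∈ X) if and only if every straight line K = {x + t·v : t ∈ ℝ} (with x, v ∈ X, v ≠ 0) is coproximinal in (X, γ). -/
/-- A gauge on a real vector space: nonnegative, vanishing exactly at `0`,
positively homogeneous, and subadditive. -/
def IsGauge {X : Type*} [AddCommGroup X] [Module ℝ X] (γ : X → ℝ) : Prop :=
  (∀ x, 0 ≤ γ x) ∧ (∀ x, γ x = 0 ↔ x = 0) ∧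
    (∀ (l : ℝ) (x : X), 0 < l → γ (l • x) = l * γ x) ∧
    (∀ x y, γ (x + y) ≤ γ x + γ y)

/-- `K` is coproximinal: every point of the space has a best coapproximation in `K`. -/
def Coproximinal {X : Type*} [AddCommGroup X] (γ : X → ℝ) (K : Set X) : Prop :=
  ∀ y : X, ∃ x ∈ K, ∀ z ∈ K, γ (x - z) ≤ γ (y - z)

section Helpers
variable {X : Type*} [AddCommGroup X] [Module ℝ X] {γ : X → ℝ}

lemma IsGauge.nonneg (h : IsGauge γ) (x : X) : 0 ≤ γ x := h.1 x

lemma IsGauge.zero' (h : IsGauge γ) : γ (0 : X) = 0 := (h.2.1 0).2 rfl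

lemma IsGauge.pos (h : IsGauge γ) {x : X} (hx : x ≠ 0) : 0 < γ x :=
  lt_of_le_of_ne (h.1 x) fun e => hx ((h.2.1 x).1 e.symm)

lemma IsGauge.homog (h : IsGauge γ) {l : ℝ} (hl : 0 < l) (x : X) :
    γ (l • x) = l * γ x := h.2.2.1 l x hl

lemma IsGauge.subadd (h : IsGauge γ) (x y : X) : γ (x + y) ≤ γ x + γ y := h.2.2.2 x y

lemma IsGauge.homog_neg (h : IsGauge γ) {l : ℝ} (hl : l < 0) (x : X) :
    γ (l • x) = (-l) * γ (-x) := by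
  have e : l • x = (-l) • (-x) := by rw [smul_neg, neg_smul, neg_neg]
  rw [e, h.homog (by linarith) (-x)]

/-- Forward direction: a norm makes every line coproximinal. -/
lemma forward_dir (hγ : IsGauge γ) (hsym : ∀ x, γ (-x) = γ x) (p v : X) (hv : v ≠ 0) :
    Coproximinal γ {q : X | ∃ t : ℝ, q = p + t • v} := by
  intro y
  have hcpos : 0 < γ v := hγ.pos hv
  set c := γ v with hc
  set f : ℝ → ℝ := fun t => γ (y - (p + t • v)) with hf
  have hfnn : ∀ t, 0 ≤ f t := fun t => hγ.nonneg _
  have key : ∀ t₁ t₂ : ℝ, c * (t₁ - t₂) ≤ f t₁ + f t₂ := by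
    intro t₁ t₂
    rcases le_or_gt t₁ t₂ with h | h
    · have h0 : c * (t₁ - t₂) ≤ 0 := mul_nonpos_of_nonneg_of_nonpos hcpos.le (by linarith)
      linarith [hfnn t₁, hfnn t₂]
    · have h1 : γ ((t₁ - t₂) • v) = (t₁ - t₂) * c := hγ.homog (by linarith) v
      have h2 : (t₁ - t₂) • v = (y - (p + t₂ • v)) + -(y - (p + t₁ • v)) := by
        rw [sub_smul]; abel
      have h3 := hγ.subadd (y - (p + t₂ • v)) (-(y - (p + t₁ • v)))
      rw [← h2, hsym] at h3
      rw [h1] at h3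
      have := hfnn t₁
      have := hfnn t₂
      simp only [hf] at *
      nlinarith
  have hub : ∀ t u : ℝ, t - f t / c ≤ u + f u / c := by
    intro t u
    have h1 : t - u ≤ (f t + f u) / c := (le_div_iff₀ hcpos).2 (by nlinarith [key t u])
    rw [add_div] at h1
    linarith
  have hTne : (Set.range (fun t => t - f t / c)).Nonempty := ⟨0 - f 0 / c, 0, rfl⟩
  have hbdd : BddAbove (Set.range (fun t => t - f t / c)) :=
    ⟨0 + f 0 / c, by rintro _ ⟨t, rfl⟩; exact hub t 0⟩
  set s := sSup (Set.range (fun t => t - f t / c)) with hs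
  have hs1 : ∀ t, t - f t / c ≤ s := fun t => le_csSup hbdd ⟨t, rfl⟩
  have hs2 : ∀ t, s ≤ t + f t / c := fun t =>
    csSup_le hTne (by rintro _ ⟨u, rfl⟩; exact hub u t)
  refine ⟨p + s • v, ⟨s, rfl⟩, ?_⟩
  rintro z ⟨t, rfl⟩
  have hxz : (p + s • v) - (p + t • v) = (s - t) • v := by
    rw [sub_smul]; abel
  rw [hxz]
  show γ ((s - t) • v) ≤ f t
  rcases lt_trichotomy s t with h | h | h
  · rw [hγ.homog_neg (by linarith : s - t < 0) v, hsym]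
    have h3 : t - s ≤ f t / c := by linarith [hs1 t]
    have : (t - s) * c ≤ (f t / c) * c := by nlinarith
    rw [div_mul_cancel₀ _ hcpos.ne'] at this
    nlinarith
  · rw [h, sub_self, zero_smul, hγ.zero']
    exact hfnn t
  · rw [hγ.homog (by linarith : 0 < s - t) v]
    have h3 : s - t ≤ f t / c := by linarith [hs2 t]
    have : (s - t) * c ≤ (f t / c) * c := by nlinarith
    rw [div_mul_cancel₀ _ hcpos.ne'] at this
    nlinarith

end Helpers

lemma eq_zero_of_abs_le_linear {A C : ℝ} (hC : 0 < C)
    (h : ∀ σ : ℝ, 0 < σ → |A| ≤ σ * C) : A = 0 := by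
  by_contra hA
  have h0 : 0 < |A| := abs_pos.2 hA
  have h1 := h (|A| / (2 * C)) (by positivity)
  have h2 : (|A| / (2 * C)) * C = |A| / 2 := by field_simp
  rw [h2] at h1
  linarith

set_option maxHeartbeats 2000000 in
lemma ratio_le {p q : ℝ → ℝ} {κ : ℝ} (hκ : 0 < κ)
    (hp : ∀ t, 0 < p t) (hq : ∀ t, 0 < q t)
    (hLq : ∀ a b : ℝ, q a ≤ q b + κ * |a - b|)
    (key : ∀ t h : ℝ, 2 * (p t * q t) ≤ q t * p (t + h) + p t * q (t - h)) :
    ∀ s t : ℝ, s ≤ t → q t * p s ≤ p t * q s := by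
  intro s t hst
  rcases eq_or_lt_of_le hst with rfl | hlt
  · rw [mul_comm]
  have hqc : Continuous q := by
    have hlip : LipschitzWith κ.toNNReal q := by
      apply LipschitzWith.of_dist_le_mul
      intro a b
      rw [Real.dist_eq, Real.dist_eq, Real.coe_toNNReal _ hκ.le]
      have h1 := hLq a b
      have h2 := hLq b a
      rw [abs_sub_comm b a] at h2
      rw [abs_le]
      constructor <;> linarith
    exact hlip.continuous
  obtain ⟨τ₀, hτ₀mem, hτ₀⟩ := (isCompact_Icc : IsCompact (Set.Icc s t)).exists_isMinOn
    ⟨s, by constructor <;> linarith⟩ hqc.continuousOn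
  obtain ⟨δ, hδdef⟩ : ∃ δ : ℝ, δ = q τ₀ := ⟨_, rfl⟩
  have hδ : 0 < δ := hδdef ▸ hq τ₀
  have hδle : ∀ τ, s ≤ τ → τ ≤ t → δ ≤ q τ := fun τ h1 h2 => hδdef ▸ hτ₀ ⟨h1, h2⟩
  obtain ⟨T, hT⟩ : ∃ T : ℝ, T = t - s := ⟨_, rfl⟩
  have hTpos : 0 < T := by rw [hT]; linarith
  suffices H : ∀ ε : ℝ, 0 < ε → q t * p s ≤ p t * q s + ε by
    by_contra hcon
    push_neg at hcon
    have := H ((q t * p s - p t * q s) / 2) (by linarith)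
    linarith
  intro ε hε
  obtain ⟨M, hM⟩ : ∃ M : ℝ,
      M = κ * T * (p t + p s) + κ ^ 2 * T ^ 2 / δ ^ 2 * (q t * p s) := ⟨_, rfl⟩
  obtain ⟨n, hn⟩ := exists_nat_gt (max (max (M / ε) (κ * T / δ)) (max T (κ ^ 2 * T ^ 2 / δ ^ 2)))
  have hnT : T < (n : ℝ) := lt_of_le_of_lt (le_max_of_le_right (le_max_left _ _)) hn
  have hn0 : (0 : ℝ) < n := lt_trans hTpos hnT
  have hnMε : M / ε < (n : ℝ) := lt_of_le_of_lt (le_max_of_le_left (le_max_left _ _)) hn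
  have hnκT : κ * T / δ < (n : ℝ) := lt_of_le_of_lt (le_max_of_le_left (le_max_right _ _)) hn
  have hnη' : κ ^ 2 * T ^ 2 / δ ^ 2 < (n : ℝ) :=
    lt_of_le_of_lt (le_max_of_le_right (le_max_right _ _)) hn
  obtain ⟨h, hh⟩ : ∃ h : ℝ, h = T / n := ⟨_, rfl⟩
  have hhpos : 0 < h := by rw [hh]; exact div_pos hTpos hn0
  have hκh : κ * h < δ := by
    rw [hh, ← mul_div_assoc, div_lt_iff₀ hn0]
    rw [div_lt_iff₀ hδ] at hnκT
    nlinarith [hnκT]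
  obtain ⟨η, hη⟩ : ∃ η : ℝ, η = (κ * h / δ) ^ 2 := ⟨_, rfl⟩
  have hηnn : 0 ≤ η := hη ▸ sq_nonneg _
  have hη1 : η ≤ 1 := by
    rw [hη]
    have h1 : κ * h / δ ≤ 1 := by rw [div_le_one hδ]; linarith
    have h2 : 0 ≤ κ * h / δ := by positivity
    nlinarith
  have hnh : (n : ℝ) * h = T := by rw [hh]; field_simp
  have hnηeq : (n : ℝ) * η = κ ^ 2 * T ^ 2 / (δ ^ 2 * n) := by
    rw [hη, hh]; field_simp
  have hnη1 : (n : ℝ) * η ≤ 1 := by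
    rw [hnηeq, div_le_one (by positivity)]
    rw [div_lt_iff₀ (by positivity : (0:ℝ) < δ ^ 2)] at hnη'
    nlinarith [hnη']
  have main : ∀ i : ℕ, i ≤ n →
      q (s + i * h - h) * (p s * (1 - η) ^ i) ≤ p (s + i * h) * q (s - h) := by
    intro i hi
    induction i with
    | zero =>
      simp only [Nat.cast_zero, zero_mul, add_zero, pow_zero, mul_one]
      rw [mul_comm]
    | succ i ih =>
      have hi' : i ≤ n := Nat.le_of_succ_le hi
      have IH := ih hi'
      have hin : (i : ℝ) + 1 ≤ n := by exact_mod_cast hi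
      obtain ⟨ti, hti⟩ : ∃ ti : ℝ, ti = s + i * h := ⟨_, rfl⟩
      rw [← hti] at IH
      have htis : s ≤ ti := by
        rw [hti]
        have : 0 ≤ (i : ℝ) * h := by positivity
        linarith
      have htit : ti ≤ t := by
        rw [hti]
        have h1 : ((i : ℝ) + 1) * h ≤ (n : ℝ) * h :=
          mul_le_mul_of_nonneg_right hin hhpos.le
        rw [hnh, hT] at h1
        linarith
      have hB' : δ ≤ q ti := hδle ti htis htit
      have hBpos : 0 < q (ti - h) := hq _
      have habs1 : q ti - q (ti - h) ≤ κ * h := by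
        have h0 := hLq ti (ti - h)
        have he : ti - (ti - h) = h := by ring
        rw [he, abs_of_pos hhpos] at h0; linarith
      have habs2 : q (ti - h) - q ti ≤ κ * h := by
        have h0 := hLq (ti - h) ti
        have he : ti - h - ti = -h := by ring
        rw [he, abs_neg, abs_of_pos hhpos] at h0; linarith
      have hsq : (q ti - q (ti - h)) ^ 2 ≤ (κ * h) ^ 2 := sq_le_sq' (by linarith) habs1
      have hκhη : (κ * h) ^ 2 = η * δ ^ 2 := by
        rw [hη]; field_simp
      have hB'sq : δ ^ 2 ≤ q ti ^ 2 := pow_le_pow_left₀ hδ.le hB' 2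
      have fact1 : q ti ^ 2 * (1 - η) ≤ (2 * q ti - q (ti - h)) * q (ti - h) := by
        nlinarith [hsq, hκhη, hB'sq, mul_le_mul_of_nonneg_left hB'sq hηnn]
      have fact2 := key ti h
      have fact2' : p ti * (2 * q ti - q (ti - h)) ≤ p (ti + h) * q ti := by nlinarith [fact2]
      have e3 : p ti * (q ti ^ 2 * (1 - η)) ≤ p (ti + h) * q ti * q (ti - h) := by
        calc p ti * (q ti ^ 2 * (1 - η)) ≤ p ti * ((2 * q ti - q (ti - h)) * q (ti - h)) :=
              mul_le_mul_of_nonneg_left fact1 (hp ti).le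
        _ = (p ti * (2 * q ti - q (ti - h))) * q (ti - h) := by ring
        _ ≤ (p (ti + h) * q ti) * q (ti - h) := mul_le_mul_of_nonneg_right fact2' hBpos.le
        _ = p (ti + h) * q ti * q (ti - h) := by ring
      have hg1 : s + ((i : ℕ) + 1 : ℕ) * h - h = ti := by push_cast; rw [hti]; ring
      have hg2 : s + ((i : ℕ) + 1 : ℕ) * h = ti + h := by push_cast; rw [hti]; ring
      rw [hg1, hg2]
      have hQpos : 0 < q (s - h) := hq _
      have key2 : (q (ti - h) * q ti) * (q ti * (p s * (1 - η) ^ (i + 1))) ≤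
          (q (ti - h) * q ti) * (p (ti + h) * q (s - h)) := by
        calc (q (ti - h) * q ti) * (q ti * (p s * (1 - η) ^ (i + 1)))
            = (q (ti - h) * (p s * (1 - η) ^ i)) * (q ti ^ 2 * (1 - η)) := by ring
        _ ≤ (p ti * q (s - h)) * (q ti ^ 2 * (1 - η)) :=
              mul_le_mul_of_nonneg_right IH
                (mul_nonneg (sq_nonneg _) (by linarith))
        _ = (p ti * (q ti ^ 2 * (1 - η))) * q (s - h) := by ring
        _ ≤ (p (ti + h) * q ti * q (ti - h)) * q (s - h) :=
              mul_le_mul_of_nonneg_right e3 hQpos.le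
        _ = (q (ti - h) * q ti) * (p (ti + h) * q (s - h)) := by ring
      exact le_of_mul_le_mul_left key2 (mul_pos (hq _) (hq _))
  have fin := main n le_rfl
  have hpt : s + (n : ℝ) * h = t := by rw [hnh, hT]; ring
  rw [hpt] at fin
  have C2 : q (s - h) ≤ q s + κ * h := by
    have h0 := hLq (s - h) s
    have he : s - h - s = -h := by ring
    rw [he, abs_neg, abs_of_pos hhpos] at h0; linarith
  have C3 : q t - κ * h ≤ q (t - h) := by
    have h0 := hLq t (t - h)
    have he : t - (t - h) = h := by ring
    rw [he, abs_of_pos hhpos] at h0; linarith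
  have C4 : 1 - (n : ℝ) * η ≤ (1 - η) ^ n := by
    have h0 := one_add_mul_le_pow (a := -η) (by linarith) n
    have e1 : (1 : ℝ) + (n : ℝ) * (-η) = 1 - (n : ℝ) * η := by ring
    have e2 : (1 : ℝ) + -η = 1 - η := by ring
    rw [e1, e2] at h0
    exact h0
  have C5 : 0 ≤ q t - κ * h := by
    have := hδle t hst le_rfl; linarith
  have C6 : 0 ≤ 1 - (n : ℝ) * η := by linarith
  have C7 : (q t - κ * h) * (p s * (1 - (n : ℝ) * η)) ≤ q (t - h) * (p s * (1 - η) ^ n) :=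
    mul_le_mul C3 (mul_le_mul_of_nonneg_left C4 (hp s).le)
      (mul_nonneg (hp s).le C6) (hq _).le
  have C8 : p t * q (s - h) ≤ p t * (q s + κ * h) := mul_le_mul_of_nonneg_left C2 (hp t).le
  have hnn : 0 ≤ κ * h * ((n : ℝ) * η) * p s :=
    mul_nonneg (mul_nonneg (mul_nonneg hκ.le hhpos.le) (mul_nonneg hn0.le hηnn)) (hp s).le
  have hmain2 : q t * p s ≤ p t * q s + (κ * h * (p t + p s) + ((n : ℝ) * η) * (q t * p s)) := by
    nlinarith [C7, C8, fin, hnn]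
  have heq : κ * h * (p t + p s) + ((n : ℝ) * η) * (q t * p s) = M / n := by
    rw [hnηeq, hh, hM]
    field_simp
  have hlast : M / n < ε := by
    rw [div_lt_iff₀ hn0]
    rw [div_lt_iff₀ hε] at hnMε
    linarith
  rw [heq] at hmain2
  linarith

section Glue
variable {X : Type*} [AddCommGroup X] [Module ℝ X] {γ : X → ℝ}

/-- The key inequality extracted from coproximinality of lines through the origin. -/
lemma star_ineq (hγ : IsGauge γ)
    (hcop : ∀ p v : X, v ≠ 0 → Coproximinal γ {q : X | ∃ t : ℝ, q = p + t • v})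
    {v : X} (hv : v ≠ 0) (y : X) :
    γ v * γ (-v) ≤ γ (-v) * γ y + γ v * γ (y - v) := by
  obtain ⟨x, ⟨s, hx⟩, hbest⟩ := hcop 0 v hv y
  subst hx
  have e1 := hbest 0 ⟨0, by simp⟩
  have e2 := hbest v ⟨1, by simp⟩
  rw [zero_add, sub_zero, sub_zero] at e1
  have hsv : (0 : X) + s • v - v = (s - 1) • v := by
    rw [sub_smul, one_smul, zero_add]
  rw [hsv] at e2
  have ha : 0 < γ v := hγ.pos hv
  have hb : 0 < γ (-v) := hγ.pos (neg_ne_zero.2 hv)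
  have hy : 0 ≤ γ y := hγ.nonneg y
  have hyv : 0 ≤ γ (y - v) := hγ.nonneg _
  rcases le_or_gt s 0 with hs | hs
  · have h2 : γ ((s - 1) • v) = (1 - s) * γ (-v) := by
      rw [hγ.homog_neg (by linarith : s - 1 < 0) v]; ring_nf
    rw [h2] at e2
    have k := mul_le_mul_of_nonneg_left e2 ha.le
    nlinarith [k, mul_nonneg (mul_nonneg (neg_nonneg.2 hs) ha.le) hb.le,
      mul_nonneg hb.le hy]
  · rcases lt_or_ge s 1 with hs1 | hs1
    · have h1 : γ (s • v) = s * γ v := hγ.homog hs v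
      have h2 : γ ((s - 1) • v) = (1 - s) * γ (-v) := by
        rw [hγ.homog_neg (by linarith : s - 1 < 0) v]; ring_nf
      rw [h1] at e1; rw [h2] at e2
      nlinarith
    · have h1 : γ (s • v) = s * γ v := hγ.homog hs v
      rw [h1] at e1
      have k := mul_le_mul_of_nonneg_left e1 hb.le
      nlinarith [k, mul_nonneg (mul_nonneg (by linarith : (0:ℝ) ≤ s - 1) hb.le) ha.le,
        mul_nonneg ha.le hyv]

lemma keyK (hγ : IsGauge γ)
    (hcop : ∀ p v : X, v ≠ 0 → Coproximinal γ {q : X | ∃ t : ℝ, q = p + t • v})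
    {m : X} (hm : m ≠ 0) (u : X) :
    2 * (γ m * γ (-m)) ≤ γ (-m) * γ (m + u) + γ m * γ (u - m) := by
  have h2m : (2 : ℝ) • m ≠ 0 := smul_ne_zero two_ne_zero hm
  have h := star_ineq hγ hcop h2m (m + u)
  have e1 : γ ((2 : ℝ) • m) = 2 * γ m := hγ.homog two_pos m
  have e2 : γ (-((2 : ℝ) • m)) = 2 * γ (-m) := by
    rw [← smul_neg]; exact hγ.homog two_pos (-m)
  have e3 : m + u - (2 : ℝ) • m = u - m := by
    rw [two_smul]; abel
  rw [e1, e2, e3] at h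
  linarith

end Glue

set_option maxHeartbeats 4000000 in
theorem stmt_0 {X : Type*} [AddCommGroup X] [Module ℝ X]
    (hdim : Module.finrank ℝ X = 2) (γ : X → ℝ) (hγ : IsGauge γ) :
    (∀ x : X, γ (-x) = γ x) ↔
      (∀ p v : X, v ≠ 0 → Coproximinal γ {q : X | ∃ t : ℝ, q = p + t • v}) := by
  constructor
  · intro hsym p v hv
    exact forward_dir hγ hsym p v hv
  · intro hcop x
    rcases eq_or_ne x 0 with rfl | hx
    · rw [neg_zero]
    have hspan : Submodule.span ℝ {x} ≠ ⊤ := by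
      intro htop
      have h1 : Module.finrank ℝ (Submodule.span ℝ {x} : Submodule ℝ X) = 1 :=
        finrank_span_singleton hx
      rw [htop, finrank_top, hdim] at h1
      exact absurd h1 (by norm_num)
    obtain ⟨w, hw⟩ : ∃ w : X, w ∉ Submodule.span ℝ {x} := by
      by_contra hA
      push_neg at hA
      exact hspan (Submodule.eq_top_iff'.2 hA)
    have hwx : ∀ t : ℝ, w + t • x ≠ 0 := by
      intro t h
      apply hw
      have h2 : w = (-t) • x := by
        rw [neg_smul]
        exact add_eq_zero_iff_eq_neg.1 h
      exact Submodule.mem_span_singleton.2 ⟨-t, h2.symm⟩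
    have hwx' : ∀ t : ℝ, -w - t • x ≠ 0 := by
      intro t h
      apply hwx t
      have e : -(w + t • x) = -w - t • x := by abel
      rw [← e] at h
      exact neg_eq_zero.1 h
    have hwne : w ≠ 0 := fun h => hw (h ▸ Submodule.zero_mem _)
    obtain ⟨κ, hκdef⟩ : ∃ κ : ℝ, κ = max (γ x) (γ (-x)) := ⟨_, rfl⟩
    have hκ : 0 < κ := by rw [hκdef]; exact lt_max_iff.2 (Or.inl (hγ.pos hx))
    have hsmx : ∀ c : ℝ, γ (c • x) ≤ |c| * κ := by
      intro c
      rcases lt_trichotomy c 0 with hc | rfl | hc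
      · rw [hγ.homog_neg hc, abs_of_neg hc, hκdef]
        exact mul_le_mul_of_nonneg_left (le_max_right _ _) (by linarith)
      · simp [hγ.zero']
      · rw [hγ.homog hc, abs_of_pos hc, hκdef]
        exact mul_le_mul_of_nonneg_left (le_max_left _ _) (by linarith)
    have hLp : ∀ a b : ℝ, γ (w + a • x) ≤ γ (w + b • x) + κ * |a - b| := by
      intro a b
      have e : w + a • x = (w + b • x) + (a - b) • x := by
        rw [sub_smul]; abel
      rw [e]
      calc γ ((w + b • x) + (a - b) • x) ≤ γ (w + b • x) + γ ((a - b) • x) := hγ.subadd _ _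
      _ ≤ γ (w + b • x) + |a - b| * κ := by linarith [hsmx (a - b)]
      _ = γ (w + b • x) + κ * |a - b| := by ring
    have hLq : ∀ a b : ℝ, γ (-w - a • x) ≤ γ (-w - b • x) + κ * |a - b| := by
      intro a b
      have e : -w - a • x = (-w - b • x) + (b - a) • x := by
        rw [sub_smul]; abel
      rw [e]
      calc γ ((-w - b • x) + (b - a) • x) ≤ γ (-w - b • x) + γ ((b - a) • x) := hγ.subadd _ _
      _ ≤ γ (-w - b • x) + |b - a| * κ := by linarith [hsmx (b - a)]
      _ = γ (-w - b • x) + κ * |a - b| := by rw [abs_sub_comm]; ring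
    have hkey : ∀ t h : ℝ, 2 * (γ (w + t • x) * γ (-w - t • x)) ≤
        γ (-w - t • x) * γ (w + (t + h) • x) + γ (w + t • x) * γ (-w - (t - h) • x) := by
      intro t h
      have hK := keyK hγ hcop (hwx t) (h • x)
      have e1 : w + t • x + h • x = w + (t + h) • x := by rw [add_smul]; abel
      have e2 : h • x - (w + t • x) = -w - (t - h) • x := by rw [sub_smul]; abel
      have e3 : -(w + t • x) = -w - t • x := by abel
      rw [e1, e2, e3] at hK
      exact hK
    have dir1 := ratio_le hκ (fun t => hγ.pos (hwx t)) (fun t => hγ.pos (hwx' t)) hLq hkey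
    have hkey2 : ∀ t h : ℝ, 2 * (γ (-w - t • x) * γ (w + t • x)) ≤
        γ (w + t • x) * γ (-w - (t + h) • x) + γ (-w - t • x) * γ (w + (t - h) • x) := by
      intro t h
      have hK := hkey t (-h)
      have e1 : t + -h = t - h := by ring
      have e2 : t - -h = t + h := by ring
      rw [e1, e2] at hK
      linarith
    have dir2 := ratio_le hκ (fun t => hγ.pos (hwx' t)) (fun t => hγ.pos (hwx t)) hLp hkey2
    have eqn' : ∀ t : ℝ, γ (-w - t • x) * γ w = γ (w + t • x) * γ (-w) := by
      intro t
      have hp0 : w + (0 : ℝ) • x = w := by rw [zero_smul, add_zero]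
      have hq0 : -w - (0 : ℝ) • x = -w := by rw [zero_smul, sub_zero]
      rcases le_total 0 t with ht | ht
      · have h1 := dir1 0 t ht
        have h2 := dir2 0 t ht
        rw [hp0, hq0] at h1 h2
        linarith
      · have h1 := dir1 t 0 ht
        have h2 := dir2 t 0 ht
        rw [hp0, hq0] at h1 h2
        linarith
    obtain ⟨μ, hμdef⟩ : ∃ μ : ℝ, μ = max (γ w) (γ (-w)) := ⟨_, rfl⟩
    have hμ : 0 < μ := by rw [hμdef]; exact lt_max_iff.2 (Or.inl (hγ.pos hwne))
    have hsmw : ∀ c : ℝ, γ (c • w) ≤ |c| * μ := by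
      intro c
      rcases lt_trichotomy c 0 with hc | rfl | hc
      · rw [hγ.homog_neg hc, abs_of_neg hc, hμdef]
        exact mul_le_mul_of_nonneg_left (le_max_right _ _) (by linarith)
      · simp [hγ.zero']
      · rw [hγ.homog hc, abs_of_pos hc, hμdef]
        exact mul_le_mul_of_nonneg_left (le_max_left _ _) (by linarith)
    have hpert : ∀ (z : X) (c : ℝ), |γ (z + c • w) - γ z| ≤ |c| * μ := by
      intro z c
      rw [abs_le]
      constructor
      · have h1 := hγ.subadd (z + c • w) ((-c) • w)
        have e : (z + c • w) + (-c) • w = z := by rw [neg_smul]; abel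
        rw [e] at h1
        have h2 := hsmw (-c)
        rw [abs_neg] at h2
        linarith
      · have h1 := hγ.subadd z (c • w)
        linarith [hsmw c]
    have hb : 0 < γ w := hγ.pos hwne
    have hb' : 0 < γ (-w) := hγ.pos (neg_ne_zero.2 hwne)
    have hCpos : 0 < μ * (γ w + γ (-w)) := by positivity
    have A1 : γ (-x) * γ w = γ x * γ (-w) := by
      have key0 : γ (-x) * γ w - γ x * γ (-w) = 0 := by
        apply eq_zero_of_abs_le_linear hCpos
        intro σ hσ
        have hE := eqn' (1 / σ)
        have e1 : w + (1 / σ) • x = (1 / σ) • (x + σ • w) := by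
          rw [smul_add, smul_smul, one_div, inv_mul_cancel₀ hσ.ne', one_smul]
          abel
        have e2 : -w - (1 / σ) • x = (1 / σ) • (-x - σ • w) := by
          rw [smul_sub, smul_smul, one_div, inv_mul_cancel₀ hσ.ne', one_smul, smul_neg]
          abel
        rw [e1, e2, hγ.homog (by positivity : (0:ℝ) < 1/σ),
          hγ.homog (by positivity : (0:ℝ) < 1/σ)] at hE
        have hE' : γ (-x - σ • w) * γ w = γ (x + σ • w) * γ (-w) := by
          have hσ0 : (1 : ℝ) / σ ≠ 0 := by positivity
          field_simp at hE
          linarith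
        have h1 := hpert (-x) (-σ)
        have e3 : -x + (-σ) • w = -x - σ • w := by rw [neg_smul]; abel
        rw [e3, abs_neg, abs_of_pos hσ] at h1
        have h2 := hpert x σ
        rw [abs_of_pos hσ] at h2
        rw [abs_le] at h1 h2
        rw [abs_le]
        have u1 : γ (-x) * γ w ≤ (γ (-x - σ • w) + σ * μ) * γ w :=
          mul_le_mul_of_nonneg_right (by linarith [h1.1]) hb.le
        have u3 : γ (x + σ • w) * γ (-w) ≤ (γ x + σ * μ) * γ (-w) :=
          mul_le_mul_of_nonneg_right (by linarith [h2.2]) hb'.le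
        have l1 : (γ (-x - σ • w) - σ * μ) * γ w ≤ γ (-x) * γ w :=
          mul_le_mul_of_nonneg_right (by linarith [h1.2]) hb.le
        have l2 : (γ x - σ * μ) * γ (-w) ≤ γ (x + σ • w) * γ (-w) :=
          mul_le_mul_of_nonneg_right (by linarith [h2.1]) hb'.le
        constructor
        · linarith [l1, l2, hE']
        · linarith [u1, u3, hE']
      linarith [key0]
    have A2 : γ x * γ w = γ (-x) * γ (-w) := by
      have key0 : γ x * γ w - γ (-x) * γ (-w) = 0 := by
        apply eq_zero_of_abs_le_linear hCpos
        intro σ hσ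
        have hE := eqn' (-(1 / σ))
        have e1 : w + (-(1 / σ)) • x = (1 / σ) • (-x + σ • w) := by
          rw [smul_add, smul_smul, one_div, inv_mul_cancel₀ hσ.ne', one_smul,
            smul_neg, neg_smul]
          abel
        have e2 : -w - (-(1 / σ)) • x = (1 / σ) • (x - σ • w) := by
          rw [smul_sub, smul_smul, one_div, inv_mul_cancel₀ hσ.ne', one_smul, neg_smul]
          abel
        rw [e1, e2, hγ.homog (by positivity : (0:ℝ) < 1/σ),
          hγ.homog (by positivity : (0:ℝ) < 1/σ)] at hE
        have hE' : γ (x - σ • w) * γ w = γ (-x + σ • w) * γ (-w) := by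
          field_simp at hE
          linarith
        have h1 := hpert x (-σ)
        have e3 : x + (-σ) • w = x - σ • w := by rw [neg_smul]; abel
        rw [e3, abs_neg, abs_of_pos hσ] at h1
        have h2 := hpert (-x) σ
        rw [abs_of_pos hσ] at h2
        rw [abs_le] at h1 h2
        rw [abs_le]
        have u1 : γ x * γ w ≤ (γ (x - σ • w) + σ * μ) * γ w :=
          mul_le_mul_of_nonneg_right (by linarith [h1.1]) hb.le
        have u3 : γ (-x + σ • w) * γ (-w) ≤ (γ (-x) + σ * μ) * γ (-w) :=
          mul_le_mul_of_nonneg_right (by linarith [h2.2]) hb'.le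
        have l1 : (γ (x - σ • w) - σ * μ) * γ w ≤ γ x * γ w :=
          mul_le_mul_of_nonneg_right (by linarith [h1.2]) hb.le
        have l2 : (γ (-x) - σ * μ) * γ (-w) ≤ γ (-x + σ • w) * γ (-w) :=
          mul_le_mul_of_nonneg_right (by linarith [h2.1]) hb'.le
        constructor
        · linarith [l1, l2, hE']
        · linarith [u1, u3, hE']
      linarith [key0]
    have hxp : 0 < γ x := hγ.pos hx
    have hxp' : 0 < γ (-x) := hγ.pos (neg_ne_zero.2 hx)
    have h2 : γ x ^ 2 * γ (-w) = γ (-x) ^ 2 * γ (-w) := by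
      linear_combination (-(γ x)) * A1 + (γ (-x)) * A2
    have h3 : γ x ^ 2 = γ (-x) ^ 2 := mul_right_cancel₀ hb'.ne' h2
    have h4 : (γ (-x) - γ x) * (γ (-x) + γ x) = 0 := by linear_combination - h3
    rcases mul_eq_zero.1 h4 with h5 | h5
    · linarith [sub_eq_zero.1 h5]
    · linarith
end

section
/- Let γ be a gauge on a real vector space X. Then γ and the reverse gauge γ∨(x) = γ(−x) are equivalent if and only if there exists a norm ‖·‖ on X that is equivalent to γ (i.e., there exist constants c₀, c₁ > 0 with c₀·γ(x) ≤ ‖x‖ ≤ c₁·γ(x) for all x ∈ X). -/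
theorem stmt_5 {X : Type*} [AddCommGroup X] [Module ℝ X]
    (γ : X → ℝ) (hγ : IsGauge γ) :
    (∃ c₀ c₁ : ℝ, 0 < c₀ ∧ 0 < c₁ ∧
      ∀ x : X, c₀ * γ x ≤ γ (-x) ∧ γ (-x) ≤ c₁ * γ x) ↔
    (∃ N : X → ℝ,
      (∀ x : X, 0 ≤ N x) ∧
      (∀ x : X, N x = 0 ↔ x = 0) ∧
      (∀ (l : ℝ) (x : X), N (l • x) = |l| * N x) ∧
      (∀ x y : X, N (x + y) ≤ N x + N y) ∧
      (∃ c₀ c₁ : ℝ, 0 < c₀ ∧ 0 < c₁ ∧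
        ∀ x : X, c₀ * γ x ≤ N x ∧ N x ≤ c₁ * γ x)) := by
  obtain ⟨hnn, hzero, hhom, hsub⟩ := hγ
  have hγ0 : γ 0 = 0 := (hzero 0).mpr rfl
  constructor
  · rintro ⟨c₀, c₁, hc₀, hc₁, hc⟩
    refine ⟨fun x => γ x + γ (-x), fun x => add_nonneg (hnn x) (hnn (-x)), ?_, ?_, ?_,
      1, 1 + c₁, one_pos, by linarith, fun x => ?_⟩
      <;> dsimp only
    · intro x
      constructor
      · intro h
        have h1 : γ x = 0 := le_antisymm (by nlinarith [hnn x, hnn (-x)]) (hnn x)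
        exact (hzero x).mp h1
      · rintro rfl; simp [hγ0]
    · intro l x
      rcases lt_trichotomy l 0 with hl | hl | hl
      · have h1 : γ (l • x) = -l * γ (-x) := by
          have := hhom (-l) (-x) (by linarith)
          simpa [neg_smul, smul_neg] using this
        have h2 : γ (-(l • x)) = -l * γ x := by
          have := hhom (-l) x (by linarith)
          simpa [neg_smul] using this
        rw [h1, h2, abs_of_neg hl]; ring
      · subst hl; simp [hγ0]
      · rw [hhom l x hl, abs_of_pos hl]
        have : -(l • x) = l • (-x) := by simp
        rw [this, hhom l (-x) hl]; ring
    · intro x y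
      have h1 := hsub x y
      have h2 := hsub (-x) (-y)
      have : -(x + y) = -x + -y := by abel
      rw [this]; linarith
    · obtain ⟨h1, h2⟩ := hc x
      constructor
      · nlinarith [hnn (-x)]
      · nlinarith
  · rintro ⟨N, hNnn, hNzero, hNhom, hNsub, c₀, c₁, hc₀, hc₁, hc⟩
    have hNsymm : ∀ x : X, N (-x) = N x := by
      intro x
      have := hNhom (-1) x
      simpa using this
    refine ⟨c₀ / c₁, c₁ / c₀, by positivity, by positivity, fun x => ?_⟩
    obtain ⟨h1, h2⟩ := hc x
    obtain ⟨h3, h4⟩ := hc (-x)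
    rw [hNsymm x] at h3 h4
    constructor
    · rw [div_mul_eq_mul_div, div_le_iff₀ hc₁]; nlinarith
    · rw [div_mul_eq_mul_div, le_div_iff₀ hc₀]; nlinarith
end

section
/- Let X = ℓ¹ be the space of absolutely summable real sequences, equipped with γ(ξ₁, ξ₂, …) = max{ sup_{i ≥ 1} |ξ_i|, Σ_{i=1}^∞ ξ_i }. Then γ is a gauge on ℓ¹, and the sequence (x_n)_{n ≥ 1} ⊂ ℓ¹ defined by x_n = (1/n, …, 1/n, 0, 0, …) (with n entries equal to 1/n) satisfies γ(x_n) = 1 for every n and lim_{n → ∞} γ(−x_n) = 0. -/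
open Filter Topology

/-- The gauge `γ(ξ₁,ξ₂,…) = max { supᵢ |ξᵢ| , Σᵢ ξᵢ }` on `ℓ¹`. -/
noncomputable def gammaL1 (f : lp (fun _ : ℕ => ℝ) 1) : ℝ :=
  max (⨆ i : ℕ, |f i|) (∑' i : ℕ, f i)

lemma bdd_abs (f : lp (fun _ : ℕ => ℝ) 1) : BddAbove (Set.range fun i => |f i|) := by
  refine ⟨‖f‖, ?_⟩
  rintro _ ⟨i, rfl⟩
  simpa [Real.norm_eq_abs] using lp.norm_apply_le_norm one_ne_zero f i

lemma summ (f : lp (fun _ : ℕ => ℝ) 1) : Summable fun i => (f i : ℝ) := by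
  have := (lp.memℓp f).summable (p := 1) (by norm_num)
  refine Summable.of_norm ?_
  simpa [Real.rpow_one] using this

lemma xfun_mem (n : ℕ) :
    Memℓp (fun i : ℕ => if i < n then (1 : ℝ) / n else 0) 1 := by
  apply memℓp_gen
  apply summable_of_ne_finset_zero (s := Finset.range n)
  intro i hi
  simp only [Finset.mem_range] at hi
  simp [hi, Real.zero_rpow]

theorem stmt_6 :
    IsGauge gammaL1 ∧
    ∃ x : ℕ → lp (fun _ : ℕ => ℝ) 1,
      (∀ n i : ℕ, (x n) i = if i < n then (1 : ℝ) / n else 0) ∧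
      (∀ n : ℕ, 1 ≤ n → gammaL1 (x n) = 1) ∧
      Tendsto (fun n => gammaL1 (-(x n))) atTop (𝓝 0) := by
  have habs_le : ∀ (f : lp (fun _ : ℕ => ℝ) 1) (i : ℕ), |f i| ≤ ⨆ j, |f j| :=
    fun f i => le_ciSup (bdd_abs f) i
  constructor
  · refine ⟨?_, ?_, ?_, ?_⟩
    · intro f
      calc (0:ℝ) ≤ |f 0| := abs_nonneg _
        _ ≤ ⨆ j, |f j| := habs_le f 0
        _ ≤ _ := le_max_left _ _
    · intro f
      constructor
      · intro h
        ext i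
        have h1 : (⨆ j, |f j|) ≤ 0 := h ▸ le_max_left _ _
        have h2 := (habs_le f i).trans h1
        have : |f i| = 0 := le_antisymm h2 (abs_nonneg _)
        simpa [abs_eq_zero] using this
      · rintro rfl
        have h0 : ∀ i : ℕ, ((0 : lp (fun _ : ℕ => ℝ) 1) i) = 0 := fun i => rfl
        simp [gammaL1, h0]
    · intro l f hl
      have hco : ∀ i, ((l • f : lp (fun _ : ℕ => ℝ) 1) i) = l * f i := fun i => rfl
      have h1 : (⨆ i, |(l • f : lp (fun _ : ℕ => ℝ) 1) i|) = l * ⨆ i, |f i| := by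
        rw [Real.mul_iSup_of_nonneg hl.le]
        congr 1; ext i
        rw [hco, abs_mul, abs_of_pos hl]
      have h2 : (∑' i, (l • f : lp (fun _ : ℕ => ℝ) 1) i) = l * ∑' i, f i := by
        simp_rw [hco]; exact tsum_mul_left
      rw [gammaL1, gammaL1, h1, h2, mul_max_of_nonneg _ _ hl.le]
    · intro f g
      have hco : ∀ i, ((f + g : lp (fun _ : ℕ => ℝ) 1) i) = f i + g i := fun i => rfl
      apply max_le
      · refine le_trans (ciSup_le fun i => ?_)
          (add_le_add (le_max_left _ _) (le_max_left _ _))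
        rw [hco]
        exact (abs_add_le _ _).trans (add_le_add (habs_le f i) (habs_le g i))
      · have : (∑' i, (f + g : lp (fun _ : ℕ => ℝ) 1) i) = (∑' i, f i) + ∑' i, g i := by
          simp_rw [hco]; exact Summable.tsum_add (summ f) (summ g)
        rw [this]
        exact add_le_add (le_max_right _ _) (le_max_right _ _)
  · refine ⟨fun n => ⟨_, xfun_mem n⟩, fun n i => rfl, ?_, ?_⟩
    all_goals
      have hsup : ∀ n : ℕ, 1 ≤ n →
          (⨆ i : ℕ, |(fun i : ℕ => if i < n then (1 : ℝ) / n else 0) i|) = 1 / n := by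
        intro n hn
        apply le_antisymm
        · apply ciSup_le
          intro i
          by_cases h : i < n
          · simp only [h, if_true]
            rw [abs_of_nonneg (by positivity)]
          · simp only [h, if_false, abs_zero]
            positivity
        · calc (1:ℝ)/n = |(fun i : ℕ => if i < n then (1 : ℝ) / n else 0) 0| := by
                rw [show (fun i : ℕ => if i < n then (1 : ℝ) / n else 0) 0 = 1/n from
                  if_pos (by omega), abs_of_nonneg (by positivity)]
            _ ≤ _ := le_ciSup (bdd_abs ⟨_, xfun_mem n⟩) 0
      have htsum : ∀ n : ℕ, 1 ≤ n →
          (∑' i : ℕ, (fun i : ℕ => if i < n then (1 : ℝ) / n else 0) i) = 1 := by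
        intro n hn
        rw [tsum_eq_sum (s := Finset.range n) (by intro i hi; simp [Finset.mem_range.not.1 hi])]
        have hn' : (n : ℝ) ≠ 0 := Nat.cast_ne_zero.2 (by omega)
        simp [Finset.sum_ite_of_true, Finset.mem_range, div_eq_mul_inv, mul_comm,
          mul_inv_cancel₀ hn']
    · intro n hn
      have h1n : (1 : ℝ) / n ≤ 1 := by
        apply div_le_one_of_le₀ <;> simp [Nat.one_le_cast.2 hn]
      rw [gammaL1]
      rw [show (⨆ i : ℕ, |(⟨_, xfun_mem n⟩ : lp (fun _ : ℕ => ℝ) 1) i|) = 1 / n from hsup n hn]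
      rw [show (∑' i : ℕ, (⟨_, xfun_mem n⟩ : lp (fun _ : ℕ => ℝ) 1) i) = 1 from htsum n hn]
      exact max_eq_right h1n
    · have key : ∀ n : ℕ, 1 ≤ n →
          gammaL1 (-(⟨_, xfun_mem n⟩ : lp (fun _ : ℕ => ℝ) 1)) = 1 / n := by
        intro n hn
        rw [gammaL1]
        have h1 : (⨆ i, |(-(⟨_, xfun_mem n⟩ : lp (fun _ : ℕ => ℝ) 1)) i|)
            = (1:ℝ)/n := by
          rw [show (fun i => |(-(⟨_, xfun_mem n⟩ : lp (fun _ : ℕ => ℝ) 1)) i|)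
              = fun i : ℕ => |(fun i : ℕ => if i < n then (1 : ℝ) / n else 0) i| from
            funext fun i => abs_neg _]
          exact hsup n hn
        have h2 : (∑' i, (-(⟨_, xfun_mem n⟩ : lp (fun _ : ℕ => ℝ) 1)) i) = -1 := by
          rw [show (fun i => (-(⟨_, xfun_mem n⟩ : lp (fun _ : ℕ => ℝ) 1)) i)
              = fun i : ℕ => -((fun i : ℕ => if i < n then (1 : ℝ) / n else 0) i) from
            funext fun i => rfl, tsum_neg, htsum n hn]
        rw [h1, h2]
        exact max_eq_left ((by norm_num : (-1:ℝ) ≤ 0).trans (by positivity))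
      apply Tendsto.congr' _ tendsto_one_div_atTop_nhds_zero_nat
      filter_upwards [eventually_ge_atTop 1] with n hn
      exact (key n hn).symm
end

section
/- Let X = ℓ¹ be the space of absolutely summable real sequences, equipped with the gauge γ(ξ₁, ξ₂, …) = max{ sup_{i ≥ 1} |ξ_i|, Σ_{i=1}^∞ ξ_i }. Then the closed unit ball B = {x ∈ ℓ¹ : γ(x) ≤ 1} is not sequentially closed with respect to γ-convergence: for x₀ = (1, 1/2, 1/4, 1/8, …) one has γ(x₀) = 2 (so x₀ ∉ B), while the sequence y_n := x₀ − x_n, where x_n = (1/n, …, 1/n, 0, 0, …) has n entries equal to 1/n, satisfies γ(y_n) = 1 for all n ≥ 1 and lim_{n → ∞} γ(y_n − x₀) = 0. -/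
open Filter Topology

lemma sum_geo : Summable (fun i : ℕ => ((1:ℝ)/2)^i) :=
  summable_geometric_of_lt_one (by norm_num) (by norm_num)

lemma mem1 : Memℓp (fun i : ℕ => ((1:ℝ)/2)^i) 1 := by
  apply memℓp_gen
  simpa [abs_of_nonneg, pow_nonneg] using sum_geo

lemma sum_ind (n : ℕ) : Summable (fun i : ℕ => if i < n then (1:ℝ)/n else 0) :=
  summable_of_ne_finset_zero (s := Finset.range n)
    (fun i hi => if_neg (by simpa using hi : ¬ i < n))

lemma mem2 (n : ℕ) : Memℓp (fun i : ℕ => if i < n then (1:ℝ)/n else 0) 1 := by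
  apply memℓp_gen
  apply summable_of_ne_finset_zero (s := Finset.range n)
  intro i hi
  have h : ¬ i < n := by simpa using hi
  simp [h]

lemma gamma_eq {f : lp (fun _ : ℕ => ℝ) 1} {c s : ℝ} (hb : ∀ i, |f i| ≤ c) (hcs : c ≤ s)
    (hs : ∑' i, f i = s) : gammaL1 f = s := by
  unfold gammaL1
  rw [hs]
  exact max_eq_right ((ciSup_le hb).trans hcs)

lemma gamma_nonneg {f : lp (fun _ : ℕ => ℝ) 1} {c : ℝ} (hb : ∀ i, |f i| ≤ c) :
    0 ≤ gammaL1 f := by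
  have hB : BddAbove (Set.range fun i => |f i|) := ⟨c, by rintro _ ⟨i, rfl⟩; exact hb i⟩
  exact le_trans (abs_nonneg (f 0)) ((le_ciSup hB 0).trans (le_max_left _ _))

lemma gamma_le {f : lp (fun _ : ℕ => ℝ) 1} {c : ℝ} (hb : ∀ i, |f i| ≤ c)
    (ht : ∑' i, f i ≤ c) : gammaL1 f ≤ c :=
  max_le (ciSup_le hb) ht

lemma tsum_geo : ∑' i : ℕ, ((1:ℝ)/2)^i = 2 := by
  rw [tsum_geometric_of_lt_one (by norm_num) (by norm_num)]
  norm_num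

lemma tsum_ind {n : ℕ} (hn : 1 ≤ n) : ∑' i : ℕ, (if i < n then (1:ℝ)/n else 0) = 1 := by
  rw [tsum_eq_sum (s := Finset.range n)
    (fun i hi => if_neg (by simpa using hi : ¬ i < n))]
  rw [Finset.sum_congr rfl (fun i hi => if_pos (Finset.mem_range.mp hi)), Finset.sum_const,
    Finset.card_range, nsmul_eq_mul]
  field_simp

theorem stmt_7 :
    ∃ (x₀ : lp (fun _ : ℕ => ℝ) 1) (x : ℕ → lp (fun _ : ℕ => ℝ) 1),
      (∀ i : ℕ, x₀ i = (1 / 2 : ℝ) ^ i) ∧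
      (∀ n i : ℕ, (x n) i = if i < n then (1 : ℝ) / n else 0) ∧
      gammaL1 x₀ = 2 ∧
      (∀ n : ℕ, 1 ≤ n → gammaL1 (x₀ - x n) = 1) ∧
      Tendsto (fun n => gammaL1 ((x₀ - x n) - x₀)) atTop (𝓝 0) ∧
      -- hence the closed unit ball is not sequentially closed w.r.t. γ-convergence:
      ¬ (∀ (y : ℕ → lp (fun _ : ℕ => ℝ) 1) (y₀ : lp (fun _ : ℕ => ℝ) 1),
          (∀ n : ℕ, gammaL1 (y n) ≤ 1) →
          Tendsto (fun n => gammaL1 (y n - y₀)) atTop (𝓝 0) →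
          gammaL1 y₀ ≤ 1) := by
  set x₀ : lp (fun _ : ℕ => ℝ) 1 := ⟨fun i : ℕ => ((1:ℝ)/2)^i, mem1⟩ with hx₀
  set x : ℕ → lp (fun _ : ℕ => ℝ) 1 :=
    fun n => ⟨fun i : ℕ => if i < n then (1:ℝ)/n else 0, mem2 n⟩ with hx
  have hg2 : gammaL1 x₀ = 2 := by
    refine gamma_eq (c := 1) (fun i => ?_) (by norm_num) tsum_geo
    show |((1:ℝ)/2)^i| ≤ 1
    rw [abs_of_nonneg (by positivity)]
    exact pow_le_one₀ (by norm_num) (by norm_num)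
  have hg1 : ∀ n : ℕ, 1 ≤ n → gammaL1 (x₀ - x n) = 1 := by
    intro n hn
    have hsub : ⇑(x₀ - x n) = fun i => ((1:ℝ)/2)^i - (if i < n then (1:ℝ)/n else 0) := by
      rw [lp.coeFn_sub]; rfl
    refine gamma_eq (c := 1) (fun i => ?_) le_rfl ?_
    · rw [hsub]
      have h1 : (0:ℝ) ≤ ((1:ℝ)/2)^i := by positivity
      have h2 : ((1:ℝ)/2)^i ≤ 1 := pow_le_one₀ (by norm_num) (by norm_num)
      have h3 : (0:ℝ) ≤ (if i < n then (1:ℝ)/n else 0) := by positivity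
      have h4 : (if i < n then (1:ℝ)/n else 0) ≤ 1 := by
        split
        · rw [div_le_one (by exact_mod_cast hn)]
          exact_mod_cast hn
        · norm_num
      rw [abs_sub_le_iff]
      constructor <;> linarith
    · rw [hsub]
      rw [Summable.tsum_sub sum_geo (sum_ind n), tsum_geo, tsum_ind hn]
      norm_num
  have hkey : ∀ n : ℕ, x₀ - x n - x₀ = -(x n) := fun n => by abel
  have habs : ∀ n i : ℕ, |(-(x n) : lp (fun _ : ℕ => ℝ) 1) i| ≤ 1/(n:ℝ) := by
    intro n i
    rw [lp.coeFn_neg]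
    show |-(if i < n then (1:ℝ)/n else 0)| ≤ 1/(n:ℝ)
    rw [abs_neg, abs_of_nonneg (by positivity)]
    split
    · exact le_rfl
    · positivity
  have htend : Tendsto (fun n => gammaL1 ((x₀ - x n) - x₀)) atTop (𝓝 0) := by
    apply squeeze_zero (g := fun n : ℕ => 1/(n:ℝ))
    · intro n
      rw [hkey n]
      exact gamma_nonneg (habs n)
    · intro n
      rw [hkey n]
      refine gamma_le (habs n) ?_
      have hle : ∑' i : ℕ, (-(x n) : lp (fun _ : ℕ => ℝ) 1) i ≤ 0 := by
        apply tsum_nonpos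
        intro i
        rw [lp.coeFn_neg]
        show -(if i < n then (1:ℝ)/n else 0) ≤ 0
        simp only [neg_nonpos]
        positivity
      exact hle.trans (by positivity)
    · exact tendsto_one_div_atTop_nhds_zero_nat
  refine ⟨x₀, x, fun i => rfl, fun n i => rfl, hg2, hg1, htend, ?_⟩
  intro h
  have h1 := h (fun n => x₀ - x (n+1)) x₀
    (fun n => le_of_eq (hg1 (n+1) (Nat.le_add_left 1 n)))
    (htend.comp (tendsto_add_atTop_nat 1))
  rw [hg2] at h1
  linarith
end

section
/- Let γ be a gauge on a real vector space X and let X₀ be a finite-dimensional linear subspace of X. Then X₀ is sequentially closed with respect to γ-convergence: if (x_n) is a sequence in X₀ and x₀ ∈ X with γ(x_n − x₀) → 0, then x₀ ∈ X₀. -/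
open Filter Topology

lemma gauge_sum_le' {X : Type*} [AddCommGroup X] [Module ℝ X] (γ : X → ℝ)
    (h0 : γ 0 = 0) (hsub : ∀ x y, γ (x + y) ≤ γ x + γ y)
    {ι : Type*} (s : Finset ι) (f : ι → X) :
    γ (∑ i ∈ s, f i) ≤ ∑ i ∈ s, γ (f i) := by
  classical
  induction s using Finset.induction with
  | empty => simp [h0]
  | insert _ _ hi ih =>
      rw [Finset.sum_insert hi, Finset.sum_insert hi]
      exact le_trans (hsub _ _) (by linarith)

theorem stmt_9 {X : Type*} [AddCommGroup X] [Module ℝ X]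
    (γ : X → ℝ) (hγ : IsGauge γ)
    (X₀ : Submodule ℝ X) (hfd : FiniteDimensional ℝ X₀)
    (x : ℕ → X) (x₀ : X) (hmem : ∀ n : ℕ, x n ∈ X₀)
    (hconv : Tendsto (fun n => γ (x n - x₀)) atTop (𝓝 0)) :
    x₀ ∈ X₀ := by
  classical
  obtain ⟨hpos, hzero, hhom, hsub⟩ := hγ
  have hγ0 : γ 0 = 0 := (hzero 0).mpr rfl
  have hsmul : ∀ (t : ℝ) (v : X), γ (t • v) ≤ |t| * (γ v + γ (-v)) := by
    intro t v
    rcases lt_trichotomy t 0 with ht | ht | ht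
    · have hrw : t • v = (-t) • (-v) := by rw [neg_smul, smul_neg, neg_neg]
      rw [hrw, hhom (-t) (-v) (by linarith), abs_of_neg ht]
      nlinarith [hpos v, hpos (-v)]
    · simp [ht, hγ0]
    · rw [hhom t v ht, abs_of_pos ht]
      nlinarith [hpos v, hpos (-v)]
  -- the ambient finite-dimensional subspace
  set Y : Submodule ℝ X := X₀ ⊔ Submodule.span ℝ {x₀} with hYdef
  have hx₀Y : x₀ ∈ Y := Submodule.mem_sup_right (Submodule.mem_span_singleton_self x₀)
  have hxY : ∀ n, x n ∈ Y := fun n => Submodule.mem_sup_left (hmem n)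
  haveI : FiniteDimensional ℝ Y := Submodule.finiteDimensional_sup X₀ (Submodule.span ℝ {x₀})
  set d := Module.finrank ℝ Y with hd
  let e : Y ≃ₗ[ℝ] (Fin d → ℝ) := (Module.finBasis ℝ Y).equivFun
  let g : (Fin d → ℝ) → ℝ := fun u => γ ((e.symm u : Y) : X)
  have hg_sub : ∀ u v, g (u + v) ≤ g u + g v := by
    intro u v
    simp only [g, map_add, Submodule.coe_add]
    exact hsub _ _
  have hg_hom : ∀ (t : ℝ) (u : Fin d → ℝ), 0 < t → g (t • u) = t * g u := by
    intro t u ht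
    have hrw : ((e.symm (t • u) : Y) : X) = t • ((e.symm u : Y) : X) := by
      rw [map_smul]; rfl
    simp only [g, hrw]
    exact hhom t _ ht
  have hg_zero : ∀ u, g u = 0 ↔ u = 0 := by
    intro u
    rw [show g u = γ ((e.symm u : Y) : X) from rfl, hzero]
    constructor
    · intro h
      have : e.symm u = 0 := Subtype.ext (by simpa using h)
      simpa using congrArg e this
    · rintro rfl; simp
  have hg_nonneg : ∀ u, 0 ≤ g u := fun u => hpos _
  -- upper bound for g
  let v : Fin d → X := fun i => ((Module.finBasis ℝ Y i : Y) : X)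
  set C : ℝ := ∑ i : Fin d, (γ (v i) + γ (-(v i))) with hC
  have hCnn : 0 ≤ C :=
    Finset.sum_nonneg fun i _ => add_nonneg (hpos _) (hpos _)
  have hgC : ∀ u, g u ≤ C * ‖u‖ := by
    intro u
    have h1 : ((e.symm u : Y) : X) = ∑ i : Fin d, (u i) • v i := by
      show (((Module.finBasis ℝ Y).equivFun.symm u : Y) : X) = _
      rw [Module.Basis.equivFun_symm_apply]
      push_cast
      rfl
    rw [show g u = γ ((e.symm u : Y) : X) from rfl, h1]
    calc γ (∑ i : Fin d, (u i) • v i) ≤ ∑ i : Fin d, γ ((u i) • v i) :=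
          gauge_sum_le' γ hγ0 hsub _ _
      _ ≤ ∑ i : Fin d, ‖u‖ * (γ (v i) + γ (-(v i))) := by
          refine Finset.sum_le_sum fun i _ => le_trans (hsmul _ _) ?_
          have h2 : |u i| ≤ ‖u‖ := by
            simpa [Real.norm_eq_abs] using norm_le_pi_norm u i
          exact mul_le_mul_of_nonneg_right h2 (add_nonneg (hpos _) (hpos _))
      _ = C * ‖u‖ := by rw [← Finset.mul_sum, mul_comm]
  -- g is Lipschitz, hence continuous
  have hlip : ∀ u w, g u - g w ≤ C * ‖u - w‖ := by
    intro u w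
    have h1 : g u ≤ g w + g (u - w) := by
      have := hg_sub w (u - w)
      simpa using this
    linarith [hgC (u - w)]
  have hcont : Continuous g := by
    have : LipschitzWith (Real.toNNReal C) g := by
      refine LipschitzWith.of_dist_le_mul fun u w => ?_
      rw [Real.dist_eq, Real.coe_toNNReal C hCnn, dist_eq_norm]
      rw [abs_sub_le_iff]
      refine ⟨hlip u w, ?_⟩
      calc g w - g u ≤ C * ‖w - u‖ := hlip w u
        _ = C * ‖u - w‖ := by rw [norm_sub_rev]
    exact this.continuous
  -- lower bound for g
  have hlow : ∃ c : ℝ, 0 < c ∧ ∀ u, c * ‖u‖ ≤ g u := by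
    rcases Nat.eq_zero_or_pos d with hd0 | hd0
    · refine ⟨1, one_pos, fun u => ?_⟩
      have hu : u = 0 := by
        ext i
        exact absurd i.2 (by omega)
      rw [hu]
      simp [(hg_zero 0).mpr rfl]
    · haveI : Nonempty (Fin d) := ⟨⟨0, hd0⟩⟩
      have hsph : IsCompact (Metric.sphere (0 : Fin d → ℝ) 1) := isCompact_sphere 0 1
      have hne : (Metric.sphere (0 : Fin d → ℝ) 1).Nonempty :=
        NormedSpace.sphere_nonempty.mpr zero_le_one
      obtain ⟨u₀, hu₀, hmin⟩ := hsph.exists_isMinOn hne hcont.continuousOn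
      have hu₀norm : ‖u₀‖ = 1 := mem_sphere_zero_iff_norm.mp hu₀
      have hu₀ne : u₀ ≠ 0 := by
        intro h; rw [h] at hu₀norm; simp at hu₀norm
      have hcpos : 0 < g u₀ :=
        lt_of_le_of_ne (hg_nonneg u₀) (fun h => hu₀ne ((hg_zero u₀).mp h.symm))
      refine ⟨g u₀, hcpos, fun u => ?_⟩
      rcases eq_or_ne u 0 with rfl | hu
      · simp [(hg_zero 0).mpr rfl]
      · have hn : 0 < ‖u‖ := norm_pos_iff.mpr hu
        have h1 : (‖u‖⁻¹ • u) ∈ Metric.sphere (0 : Fin d → ℝ) 1 := by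
          simp [norm_smul, abs_of_pos (inv_pos.mpr hn), inv_mul_cancel₀ hn.ne']
        have h2 : g u₀ ≤ g (‖u‖⁻¹ • u) := hmin h1
        rw [hg_hom _ _ (inv_pos.mpr hn)] at h2
        calc g u₀ * ‖u‖ ≤ (‖u‖⁻¹ * g u) * ‖u‖ :=
              mul_le_mul_of_nonneg_right h2 hn.le
          _ = g u := by field_simp
  obtain ⟨c, hc, hclow⟩ := hlow
  -- transfer the convergence
  let z : ℕ → (Fin d → ℝ) := fun n => e ⟨x n, hxY n⟩
  let w : Fin d → ℝ := e ⟨x₀, hx₀Y⟩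
  set W : Submodule ℝ (Fin d → ℝ) := (X₀.comap Y.subtype).map (e : Y →ₗ[ℝ] (Fin d → ℝ)) with hW
  have hzW : ∀ n, z n ∈ W := fun n => ⟨⟨x n, hxY n⟩, hmem n, rfl⟩
  have hWclosed : IsClosed (W : Set (Fin d → ℝ)) := Submodule.closed_of_finiteDimensional W
  have hgz : ∀ n, g (z n - w) = γ (x n - x₀) := by
    intro n
    have h1 : e.symm (z n - w) = ⟨x n - x₀, Submodule.sub_mem Y (hxY n) hx₀Y⟩ := by
      rw [map_sub]
      simp only [z, w, LinearEquiv.symm_apply_apply]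
      rfl
    simp only [g, h1]
  have hnorm : ∀ n, ‖z n - w‖ ≤ c⁻¹ * γ (x n - x₀) := by
    intro n
    have h2 := hclow (z n - w)
    rw [hgz n] at h2
    rw [le_inv_mul_iff₀ hc]
    exact h2
  have htend : Tendsto z atTop (𝓝 w) := by
    rw [tendsto_iff_norm_sub_tendsto_zero]
    refine squeeze_zero (fun n => norm_nonneg _) hnorm ?_
    simpa using hconv.const_mul c⁻¹
  have hwW : w ∈ W := hWclosed.mem_of_tendsto htend (Eventually.of_forall hzW)
  obtain ⟨y, hyX₀, hy⟩ := hwW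
  have hyeq : y = ⟨x₀, hx₀Y⟩ := e.injective hy
  rw [hyeq] at hyX₀
  exact hyX₀
end

section
/- Let γ be a gauge on a real vector space X and let m ≤ n be natural numbers with dim X > n. If every n-dimensional linear subspace of X is coproximinal, then every m-dimensional linear subspace of X is coproximinal. -/
open Set

private def BCA {m : ℕ} (g : ((Fin m → ℝ) × ℝ × ℝ) → ℝ) (t : ℝ) (a : Fin m → ℝ) (s : ℝ) :
    Prop :=
  ∀ (b : Fin m → ℝ) (τ : ℝ),
    g (a - b, (s - τ) * (1 - t^2), (s - τ) * t) ≤ g (-b, -τ * (1 - t^2), 1 - τ * t)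

lemma gauge_core {m : ℕ} (g : ((Fin m → ℝ) × ℝ × ℝ) → ℝ)
    (hg0 : ∀ x, 0 ≤ g x)
    (hgz : ∀ x, g x = 0 ↔ x = 0)
    (hgh : ∀ (l : ℝ) x, 0 < l → g (l • x) = l * g x)
    (hga : ∀ x y, g (x + y) ≤ g x + g y)
    (hB : ∀ t ∈ Set.Ioo (-1:ℝ) 1, ∃ a : Fin m → ℝ, ∃ s : ℝ, BCA g t a s) :
    ∃ a : Fin m → ℝ, ∀ b : Fin m → ℝ, g (a - b, 0, 0) ≤ g (-b, 0, 1) := by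
  classical
  have hgzero : g 0 = 0 := (hgz 0).mpr rfl
  have hconv : ConvexOn ℝ (Set.univ : Set ((Fin m → ℝ) × ℝ × ℝ)) g := by
    refine ⟨convex_univ, ?_⟩
    intro x _ y _ p q hp hq hpq
    rcases eq_or_lt_of_le hp with hp0 | hp0
    · have hq1 : q = 1 := by linarith
      simp [← hp0, hq1]
    rcases eq_or_lt_of_le hq with hq0 | hq0
    · have hp1 : p = 1 := by linarith
      simp [← hq0, hp1]
    calc g (p • x + q • y) ≤ g (p • x) + g (q • y) := hga _ _
      _ = p * g x + q * g y := by rw [hgh _ _ hp0, hgh _ _ hq0]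
      _ = p • g x + q • g y := rfl
  have hgcont : Continuous g := by
    have := hconv.continuousOn isOpen_univ
    rwa [continuousOn_univ] at this
  -- lower bound by norm
  obtain ⟨x₀, hx₀s, hx₀min⟩ := (isCompact_sphere (0:((Fin m → ℝ) × ℝ × ℝ)) 1).exists_isMinOn
    (NormedSpace.sphere_nonempty.mpr zero_le_one) hgcont.continuousOn
  set δ := g x₀ with hδdef
  have hx₀ne : x₀ ≠ 0 := by
    intro h
    rw [mem_sphere_iff_norm, h] at hx₀s
    simp at hx₀s
  have hδ : 0 < δ := lt_of_le_of_ne (hg0 x₀) (fun h => hx₀ne ((hgz x₀).mp h.symm))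
  have hlow : ∀ x : ((Fin m → ℝ) × ℝ × ℝ), δ * ‖x‖ ≤ g x := by
    intro x
    rcases eq_or_ne x 0 with rfl | hx
    · simp [hgzero]
    have hn : (0:ℝ) < ‖x‖ := norm_pos_iff.mpr hx
    have hmem : ‖x‖⁻¹ • x ∈ Metric.sphere (0:((Fin m → ℝ) × ℝ × ℝ)) 1 := by
      simp [norm_smul, abs_of_nonneg (inv_nonneg.mpr hn.le), inv_mul_cancel₀ hn.ne']
    have h1 := hx₀min hmem
    have h2 : g x = ‖x‖ * g (‖x‖⁻¹ • x) := by
      rw [← hgh _ _ hn]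
      congr 1
      rw [smul_smul, mul_inv_cancel₀ hn.ne', one_smul]
    rw [h2, mul_comm δ ‖x‖]
    exact mul_le_mul_of_nonneg_left h1 hn.le
  -- uniform bound on coapproximants
  set r := g (0, 0, 1) with hrdef
  have hr0 : 0 ≤ r := hg0 _
  set R := 2 * (r / δ) with hRdef
  have hbound : ∀ (t : ℝ) (p : (Fin m → ℝ) × ℝ), t ∈ Icc (-1:ℝ) 1 → BCA g t p.1 p.2 → ‖p‖ ≤ R := by
    intro t p ht hp
    have h0 := hp 0 0
    have e1 : (p.1 - 0, (p.2 - 0) * (1 - t^2), (p.2 - 0) * t)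
        = (p.1, p.2 * (1 - t^2), p.2 * t) := by norm_num
    have e2 : ((-0 : Fin m → ℝ), -(0:ℝ) * (1 - t^2), 1 - (0:ℝ) * t)
        = ((0 : Fin m → ℝ), (0:ℝ), (1:ℝ)) := by norm_num
    rw [e1, e2] at h0
    have hVnorm : ‖(p.1, p.2 * (1 - t^2), p.2 * t)‖ ≤ r / δ := by
      rw [le_div_iff₀ hδ, mul_comm]
      exact le_trans (hlow _) h0
    have hA : ‖p.1‖ ≤ r / δ :=
      le_trans (norm_fst_le ((p.1, p.2 * (1 - t^2), p.2 * t) : (Fin m → ℝ) × ℝ × ℝ)) hVnorm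
    have hBC : ‖(p.2 * (1 - t^2), p.2 * t)‖ ≤ r / δ :=
      le_trans (norm_snd_le ((p.1, p.2 * (1 - t^2), p.2 * t) : (Fin m → ℝ) × ℝ × ℝ)) hVnorm
    have hB2 : |p.2 * (1 - t^2)| ≤ r / δ :=
      le_trans (norm_fst_le ((p.2 * (1 - t^2), p.2 * t) : ℝ × ℝ)) hBC
    have hB3 : |p.2 * t| ≤ r / δ :=
      le_trans (norm_snd_le ((p.2 * (1 - t^2), p.2 * t) : ℝ × ℝ)) hBC
    have hs : |p.2| ≤ R := by
      rcases le_or_gt (1/2) |t| with h | h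
      · have : |p.2| * (1/2) ≤ |p.2| * |t| := by gcongr
        rw [← abs_mul] at this
        rw [hRdef]
        linarith
      · have ht2 : t^2 < 1/4 := by
          have := abs_nonneg t
          nlinarith [sq_abs t]
        have h34 : (3/4 : ℝ) ≤ 1 - t^2 := by linarith
        have : |p.2| * (3/4) ≤ |p.2| * (1 - t^2) := by gcongr
        have habs : |p.2| * (1 - t^2) = |p.2 * (1 - t^2)| := by
          rw [abs_mul, abs_of_nonneg (by linarith : (0:ℝ) ≤ 1 - t^2)]
        rw [habs] at this
        have hrd : 0 ≤ r / δ := div_nonneg hr0 hδ.le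
        rw [hRdef]
        linarith
    have hdn : r / δ ≤ R := by
      rw [hRdef]
      have : 0 ≤ r / δ := div_nonneg hr0 hδ.le
      linarith
    calc ‖p‖ = max ‖p.1‖ ‖p.2‖ := Prod.norm_def p
      _ ≤ R := max_le (le_trans hA hdn) (by rwa [Real.norm_eq_abs])
  -- the graph sets
  set Cplus : Set (ℝ × ((Fin m → ℝ) × ℝ)) :=
    {q | q.1 ∈ Icc (-1:ℝ) 1 ∧ 0 ≤ q.2.2 ∧ BCA g q.1 q.2.1 q.2.2} with hCplusdef
  set Cminus : Set (ℝ × ((Fin m → ℝ) × ℝ)) :=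
    {q | q.1 ∈ Icc (-1:ℝ) 1 ∧ q.2.2 ≤ 0 ∧ BCA g q.1 q.2.1 q.2.2} with hCminusdef
  have hgraph_closed : IsClosed {q : ℝ × ((Fin m → ℝ) × ℝ) | BCA g q.1 q.2.1 q.2.2} := by
    have heq : {q : ℝ × ((Fin m → ℝ) × ℝ) | BCA g q.1 q.2.1 q.2.2}
        = ⋂ (b : Fin m → ℝ), ⋂ (τ : ℝ),
          {q : ℝ × ((Fin m → ℝ) × ℝ) |
            g (q.2.1 - b, (q.2.2 - τ) * (1 - q.1^2), (q.2.2 - τ) * q.1)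
              ≤ g (-b, -τ * (1 - q.1^2), 1 - τ * q.1)} := by
      ext q
      simp only [BCA, mem_setOf_eq, mem_iInter]
    rw [heq]
    refine isClosed_iInter fun b => isClosed_iInter fun τ => isClosed_le ?_ ?_
    · exact hgcont.comp (by fun_prop)
    · exact hgcont.comp (by fun_prop)
  have hCplus_closed : IsClosed Cplus := by
    have : Cplus = (Prod.fst ⁻¹' Icc (-1:ℝ) 1) ∩
        ({q : ℝ × ((Fin m → ℝ) × ℝ) | 0 ≤ q.2.2} ∩ {q | BCA g q.1 q.2.1 q.2.2}) := by
      ext q; simp only [hCplusdef, mem_setOf_eq, mem_inter_iff, mem_preimage]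
    rw [this]
    exact (isClosed_Icc.preimage continuous_fst).inter
      ((isClosed_le continuous_const (by fun_prop)).inter hgraph_closed)
  have hCminus_closed : IsClosed Cminus := by
    have : Cminus = (Prod.fst ⁻¹' Icc (-1:ℝ) 1) ∩
        ({q : ℝ × ((Fin m → ℝ) × ℝ) | q.2.2 ≤ 0} ∩ {q | BCA g q.1 q.2.1 q.2.2}) := by
      ext q; simp only [hCminusdef, mem_setOf_eq, mem_inter_iff, mem_preimage]
    rw [this]
    exact (isClosed_Icc.preimage continuous_fst).inter
      ((isClosed_le (by fun_prop) continuous_const).inter hgraph_closed)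
  have hsubset : ∀ q : ℝ × ((Fin m → ℝ) × ℝ), q.1 ∈ Icc (-1:ℝ) 1 → BCA g q.1 q.2.1 q.2.2 →
      q ∈ Icc (-1:ℝ) 1 ×ˢ Metric.closedBall (0 : (Fin m → ℝ) × ℝ) R := by
    intro q hq1 hq2
    refine ⟨hq1, ?_⟩
    rw [Metric.mem_closedBall, dist_zero_right]
    exact hbound q.1 q.2 hq1 hq2
  have hbnd : Bornology.IsBounded (Icc (-1:ℝ) 1 ×ˢ Metric.closedBall (0 : (Fin m → ℝ) × ℝ) R) :=
    (Metric.isBounded_Icc _ _).prod Metric.isBounded_closedBall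
  have hCplus_compact : IsCompact Cplus :=
    Metric.isCompact_of_isClosed_isBounded hCplus_closed
      (hbnd.subset (fun q hq => hsubset q hq.1 hq.2.2))
  have hCminus_compact : IsCompact Cminus :=
    Metric.isCompact_of_isClosed_isBounded hCminus_closed
      (hbnd.subset (fun q hq => hsubset q hq.1 hq.2.2))
  set Splus := Prod.fst '' Cplus with hSplusdef
  set Sminus := Prod.fst '' Cminus with hSminusdef
  have hSplus_closed : IsClosed Splus := (hCplus_compact.image continuous_fst).isClosed
  have hSminus_closed : IsClosed Sminus := (hCminus_compact.image continuous_fst).isClosed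
  -- endpoint witnesses
  have hP1 : BCA g 1 (0 : Fin m → ℝ) (1:ℝ) := by
    intro b τ
    have e1 : ((0 : Fin m → ℝ) - b, ((1:ℝ) - τ) * (1 - (1:ℝ)^2), ((1:ℝ) - τ) * 1)
        = (-b, -τ * (1 - (1:ℝ)^2), 1 - τ * 1) := by
      refine Prod.ext ?_ (Prod.ext ?_ ?_) <;> simp <;> try ring
    exact le_of_eq (congrArg g e1)
  have hPm1 : BCA g (-1) (0 : Fin m → ℝ) (-1:ℝ) := by
    intro b τ
    have e1 : ((0 : Fin m → ℝ) - b, ((-1:ℝ) - τ) * (1 - (-1:ℝ)^2), ((-1:ℝ) - τ) * (-1))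
        = (-b, -τ * (1 - (-1:ℝ)^2), 1 - τ * (-1)) := by
      refine Prod.ext ?_ (Prod.ext ?_ ?_) <;> simp <;> try ring
    exact le_of_eq (congrArg g e1)
  have h1mem : (1:ℝ) ∈ Splus :=
    ⟨(1, ((0 : Fin m → ℝ), (1:ℝ))), ⟨by norm_num, by norm_num, hP1⟩, rfl⟩
  have hm1mem : (-1:ℝ) ∈ Sminus :=
    ⟨(-1, ((0 : Fin m → ℝ), (-1:ℝ))), ⟨by norm_num, by norm_num, hPm1⟩, rfl⟩
  have hcover : Icc (-1:ℝ) 1 ⊆ Splus ∪ Sminus := by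
    intro t ht
    by_cases ht1 : t = 1
    · left; rw [ht1]; exact h1mem
    by_cases htm1 : t = -1
    · right; rw [htm1]; exact hm1mem
    have htIoo : t ∈ Ioo (-1:ℝ) 1 :=
      ⟨lt_of_le_of_ne ht.1 (Ne.symm htm1), lt_of_le_of_ne ht.2 ht1⟩
    obtain ⟨a, s, hPts⟩ := hB t htIoo
    rcases le_total 0 s with hs | hs
    · exact Or.inl ⟨(t, (a, s)), ⟨ht, hs, hPts⟩, rfl⟩
    · exact Or.inr ⟨(t, (a, s)), ⟨ht, hs, hPts⟩, rfl⟩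
  obtain ⟨t0, ht0Icc, ht0p, ht0m⟩ :=
    (isPreconnected_closed_iff.mp isPreconnected_Icc) Splus Sminus hSplus_closed hSminus_closed
      hcover ⟨1, by norm_num, h1mem⟩ ⟨-1, by norm_num, hm1mem⟩
  obtain ⟨⟨tp, ap, sp⟩, ⟨_, hsp, hPp⟩, htp⟩ := ht0p
  obtain ⟨⟨tm, am, sm⟩, ⟨_, hsm, hPm⟩, htm⟩ := ht0m
  have hPp' : BCA g t0 ap sp := by rw [← htp]; exact hPp
  have hPm' : BCA g t0 am sm := by rw [← htm]; exact hPm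
  have hsp' : (0:ℝ) ≤ sp := hsp
  have hsm' : sm ≤ (0:ℝ) := hsm
  have eR : ∀ b : Fin m → ℝ, ((-b : Fin m → ℝ), -(0:ℝ) * (1 - t0^2), 1 - (0:ℝ) * t0)
      = (-b, (0:ℝ), (1:ℝ)) := by intro b; norm_num
  by_cases hsp0 : sp = 0
  · refine ⟨ap, fun b => ?_⟩
    have h1 := hPp' b 0
    rw [hsp0] at h1
    have eL : (ap - b, ((0:ℝ) - 0) * (1 - t0^2), ((0:ℝ) - 0) * t0)
        = (ap - b, (0:ℝ), (0:ℝ)) := by norm_num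
    rw [eL, eR b] at h1
    exact h1
  by_cases hsm0 : sm = 0
  · refine ⟨am, fun b => ?_⟩
    have h1 := hPm' b 0
    rw [hsm0] at h1
    have eL : (am - b, ((0:ℝ) - 0) * (1 - t0^2), ((0:ℝ) - 0) * t0)
        = (am - b, (0:ℝ), (0:ℝ)) := by norm_num
    rw [eL, eR b] at h1
    exact h1
  have hsppos : 0 < sp := lt_of_le_of_ne hsp' (Ne.symm hsp0)
  have hsmneg : sm < 0 := lt_of_le_of_ne hsm' hsm0
  have hden : 0 < sp - sm := by linarith
  obtain ⟨θ, hθdef⟩ : ∃ θ : ℝ, θ = -sm / (sp - sm) := ⟨_, rfl⟩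
  have hθ0 : 0 < θ := by rw [hθdef]; exact div_pos (by linarith) hden
  have hθ1 : 0 < 1 - θ := by
    have : θ < 1 := by rw [hθdef, div_lt_one hden]; linarith
    linarith
  have hz : θ * sp + (1 - θ) * sm = 0 := by
    rw [hθdef]; field_simp; ring
  refine ⟨θ • ap + (1 - θ) • am, fun b => ?_⟩
  have h1 := hPp' b 0
  have h2 := hPm' b 0
  rw [eR b] at h1 h2
  have hcomb : ((θ • ap + (1 - θ) • am) - b, (0:ℝ), (0:ℝ))
      = θ • ((ap - b, (sp - 0) * (1 - t0^2), (sp - 0) * t0) : (Fin m → ℝ) × ℝ × ℝ)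
        + (1 - θ) • ((am - b, (sm - 0) * (1 - t0^2), (sm - 0) * t0) : (Fin m → ℝ) × ℝ × ℝ) := by
    simp only [Prod.smul_mk, Prod.mk_add_mk, smul_eq_mul, Prod.mk.injEq]
    refine ⟨?_, ?_, ?_⟩
    · funext i
      simp only [Pi.add_apply, Pi.sub_apply, Pi.smul_apply, smul_eq_mul]
      ring
    · linear_combination (t0^2 - 1) * hz
    · linear_combination (-t0) * hz
  calc g ((θ • ap + (1 - θ) • am) - b, (0:ℝ), (0:ℝ))
      = g (θ • ((ap - b, (sp - 0) * (1 - t0^2), (sp - 0) * t0) : (Fin m → ℝ) × ℝ × ℝ)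
        + (1 - θ) • ((am - b, (sm - 0) * (1 - t0^2), (sm - 0) * t0) : (Fin m → ℝ) × ℝ × ℝ)) :=
        congrArg g hcomb
    _ ≤ g (θ • ((ap - b, (sp - 0) * (1 - t0^2), (sp - 0) * t0) : (Fin m → ℝ) × ℝ × ℝ))
        + g ((1 - θ) • ((am - b, (sm - 0) * (1 - t0^2), (sm - 0) * t0) : (Fin m → ℝ) × ℝ × ℝ)) :=
        hga _ _
    _ = θ * g (ap - b, (sp - 0) * (1 - t0^2), (sp - 0) * t0)
        + (1 - θ) * g (am - b, (sm - 0) * (1 - t0^2), (sm - 0) * t0) := by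
        rw [hgh _ _ hθ0, hgh _ _ hθ1]
    _ ≤ θ * g (-b, 0, 1) + (1 - θ) * g (-b, 0, 1) :=
        add_le_add (mul_le_mul_of_nonneg_left h1 hθ0.le) (mul_le_mul_of_nonneg_left h2 hθ1.le)
    _ = g (-b, 0, 1) := by ring


lemma gauge_step {X : Type*} [AddCommGroup X] [Module ℝ X]
    (γ : X → ℝ) (hγ : IsGauge γ) (N : ℕ)
    (hdim : (N : Cardinal) < Module.rank ℝ X)
    (h : ∀ L : Submodule ℝ X, FiniteDimensional ℝ L → Module.finrank ℝ L = N →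
      Coproximinal γ (L : Set X))
    (K : Submodule ℝ X) (hK : FiniteDimensional ℝ K)
    (hKr : Module.finrank ℝ K + 1 = N) :
    Coproximinal γ (K : Set X) := by
  classical
  obtain ⟨hg1, hg2, hg3, hg4⟩ := hγ
  intro y
  by_cases hyK : y ∈ K
  · exact ⟨y, hyK, fun z _ => le_refl _⟩
  have hy0 : y ≠ 0 := fun hy => hyK (hy ▸ K.zero_mem)
  -- choose `v` outside `K ⊔ span {y}`
  set S := K ⊔ Submodule.span ℝ {y} with hSdef
  haveI : FiniteDimensional ℝ S := Submodule.finiteDimensional_sup _ _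
  have hSrank : Module.finrank ℝ S ≤ N := by
    have h1 := Submodule.finrank_sup_add_finrank_inf_eq K (Submodule.span ℝ {y})
    rw [finrank_span_singleton hy0, ← hSdef] at h1
    omega
  have hSne : S ≠ ⊤ := by
    intro hS
    have h2 : Module.rank ℝ X = Module.rank ℝ S := by
      rw [hS, rank_top]
    have h3 : Module.rank ℝ S = (Module.finrank ℝ S : Cardinal) :=
      (Module.finrank_eq_rank ℝ S).symm
    have h4 : Module.rank ℝ X ≤ (N : Cardinal) := by
      rw [h2, h3]
      exact_mod_cast Nat.cast_le.mpr hSrank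
    exact absurd hdim (not_lt.mpr h4)
  obtain ⟨v, hv⟩ : ∃ v, v ∉ S := by
    by_contra h'
    push_neg at h'
    exact hSne (Submodule.eq_top_iff'.mpr h')
  have hyS : y ∈ S := Submodule.mem_sup_right (Submodule.mem_span_singleton_self y)
  have hKS : K ≤ S := le_sup_left
  -- coordinates
  set m := Module.finrank ℝ K with hm
  let e : Module.Basis (Fin m) ℝ K := Module.finBasis ℝ K
  let Tmap : ((Fin m → ℝ) × ℝ × ℝ) →ₗ[ℝ] X :=
    ((K.subtype.comp (e.equivFun.symm : (Fin m → ℝ) →ₗ[ℝ] K)).comp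
        (LinearMap.fst ℝ (Fin m → ℝ) (ℝ × ℝ)))
      + ((LinearMap.toSpanSingleton ℝ X v).comp
          ((LinearMap.fst ℝ ℝ ℝ).comp (LinearMap.snd ℝ (Fin m → ℝ) (ℝ × ℝ))))
      + ((LinearMap.toSpanSingleton ℝ X y).comp
          ((LinearMap.snd ℝ ℝ ℝ).comp (LinearMap.snd ℝ (Fin m → ℝ) (ℝ × ℝ))))
  have hT : ∀ (a : Fin m → ℝ) (p q : ℝ),
      Tmap (a, p, q) = ((e.equivFun.symm a : K) : X) + p • v + q • y := by
    intro a p q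
    simp [Tmap, LinearMap.toSpanSingleton_apply]
  have hTinj : ∀ A : ((Fin m → ℝ) × ℝ × ℝ), Tmap A = 0 → A = 0 := by
    rintro ⟨a, p, q⟩ hA
    rw [hT] at hA
    have hp : p = 0 := by
      by_contra hp
      apply hv
      have h1 : ((e.equivFun.symm a : K) : X) + p • v = -(q • y) :=
        eq_neg_of_add_eq_zero_left hA
      have h2 : p • v = -(q • y) - ((e.equivFun.symm a : K) : X) :=
        eq_sub_of_add_eq' h1
      have h3 : p • v ∈ S :=
        h2 ▸ S.sub_mem (S.neg_mem (S.smul_mem q hyS)) (hKS (SetLike.coe_mem _))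
      have h4 : v = p⁻¹ • (p • v) := by
        rw [smul_smul, inv_mul_cancel₀ hp, one_smul]
      exact h4 ▸ S.smul_mem p⁻¹ h3
    rw [hp, zero_smul, add_zero] at hA
    have hq : q = 0 := by
      by_contra hq
      apply hyK
      have h1 : q • y = -((e.equivFun.symm a : K) : X) :=
        eq_neg_of_add_eq_zero_right hA
      have h2 : y = q⁻¹ • (q • y) := by
        rw [smul_smul, inv_mul_cancel₀ hq, one_smul]
      rw [h2, h1]
      exact K.smul_mem q⁻¹ (K.neg_mem (SetLike.coe_mem _))
    rw [hq, zero_smul, add_zero] at hA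
    have ha : a = 0 := by
      have h1 : (e.equivFun.symm a : K) = 0 := by
        exact_mod_cast hA
      have h2 := e.equivFun.symm.map_eq_zero_iff.mp h1
      exact h2
    rw [ha, hp, hq]
    rfl
  -- the transported gauge
  set g : ((Fin m → ℝ) × ℝ × ℝ) → ℝ := fun A => γ (Tmap A) with hgdef
  have hg0' : ∀ A, 0 ≤ g A := fun A => hg1 _
  have hgz' : ∀ A, g A = 0 ↔ A = 0 := by
    intro A
    constructor
    · intro hz
      exact hTinj A ((hg2 _).mp hz)
    · rintro rfl
      rw [hgdef]
      simp only [map_zero]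
      exact (hg2 0).mpr rfl
  have hgh' : ∀ (l : ℝ) A, 0 < l → g (l • A) = l * g A := by
    intro l A hl
    rw [hgdef]
    simp only [map_smul]
    exact hg3 l _ hl
  have hga' : ∀ A B, g (A + B) ≤ g A + g B := by
    intro A B
    rw [hgdef]
    simp only [map_add]
    exact hg4 _ _
  have hy' : y = Tmap (0, 0, 1) := by
    rw [hT]
    simp
  -- hypothesis of the core lemma
  have hBhyp : ∀ t ∈ Set.Ioo (-1:ℝ) 1, ∃ a s, BCA g t a s := by
    intro t ht
    have h1t : (1 - t^2) ≠ 0 := by nlinarith [ht.1, ht.2]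
    set u := (1 - t^2) • v + t • y with hu
    have huK : u ∉ K := by
      intro huK
      apply hv
      have h2 : (1 - t^2) • v = u - t • y := by rw [hu]; abel
      have h3 : (1 - t^2) • v ∈ S := h2 ▸ S.sub_mem (hKS huK) (S.smul_mem t hyS)
      have h4 : v = (1 - t^2)⁻¹ • ((1 - t^2) • v) := by
        rw [smul_smul, inv_mul_cancel₀ h1t, one_smul]
      exact h4 ▸ S.smul_mem _ h3
    have hu0 : u ≠ 0 := fun h' => huK (h' ▸ K.zero_mem)
    set L := K ⊔ Submodule.span ℝ {u} with hL
    haveI : FiniteDimensional ℝ L := Submodule.finiteDimensional_sup _ _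
    have hinf : K ⊓ Submodule.span ℝ {u} = ⊥ := by
      rw [Submodule.eq_bot_iff]
      rintro x ⟨hxK, hxu⟩
      obtain ⟨c, rfl⟩ := Submodule.mem_span_singleton.mp hxu
      rcases eq_or_ne c 0 with hc | hc
      · rw [hc, zero_smul]
      · exfalso
        apply huK
        have h4 : u = c⁻¹ • (c • u) := by
          rw [smul_smul, inv_mul_cancel₀ hc, one_smul]
        exact h4 ▸ K.smul_mem c⁻¹ hxK
    have hLrank : Module.finrank ℝ L = N := by
      have h1 := Submodule.finrank_sup_add_finrank_inf_eq K (Submodule.span ℝ {u})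
      rw [hinf, finrank_span_singleton hu0, finrank_bot, ← hL] at h1
      omega
    obtain ⟨x, hxL, hbca⟩ := h L inferInstance hLrank y
    obtain ⟨k, hkK, w, hw, rfl⟩ := Submodule.mem_sup.mp hxL
    obtain ⟨c, rfl⟩ := Submodule.mem_span_singleton.mp hw
    refine ⟨e.equivFun ⟨k, hkK⟩, c, ?_⟩
    intro b τ
    have hx : k + c • u = Tmap (e.equivFun ⟨k, hkK⟩, c * (1 - t^2), c * t) := by
      rw [hT, LinearEquiv.symm_apply_apply, hu]
      simp only [smul_add, smul_smul]
      abel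
    have hzeq : Tmap (b, τ * (1 - t^2), τ * t)
        = ((e.equivFun.symm b : K) : X) + τ • u := by
      rw [hT, hu]
      simp only [smul_add, smul_smul]
      abel
    have hzL : Tmap (b, τ * (1 - t^2), τ * t) ∈ L := by
      rw [hzeq]
      exact L.add_mem (le_sup_left (α := Submodule ℝ X) (SetLike.coe_mem _))
        ((le_sup_right (α := Submodule ℝ X))
          ((Submodule.span ℝ {u}).smul_mem τ (Submodule.mem_span_singleton_self u)))
    have hineq := hbca _ hzL
    have e1 : ((e.equivFun ⟨k, hkK⟩ - b : Fin m → ℝ), (c - τ) * (1 - t^2), (c - τ) * t)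
        = ((e.equivFun ⟨k, hkK⟩, c * (1 - t^2), c * t) : (Fin m → ℝ) × ℝ × ℝ)
          - (b, τ * (1 - t^2), τ * t) := by
      simp only [Prod.mk_sub_mk, Prod.mk.injEq]
      exact ⟨trivial, by ring, by ring⟩
    have e2 : ((-b : Fin m → ℝ), -τ * (1 - t^2), 1 - τ * t)
        = ((0, 0, 1) : (Fin m → ℝ) × ℝ × ℝ) - (b, τ * (1 - t^2), τ * t) := by
      simp only [Prod.mk_sub_mk, Prod.mk.injEq]
      refine ⟨by simp, by ring, trivial⟩
    show γ (Tmap _) ≤ γ (Tmap _)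
    rw [e1, e2, map_sub, map_sub, ← hx, ← hy']
    exact hineq
  obtain ⟨a, ha⟩ := gauge_core g hg0' hgz' hgh' hga' hBhyp
  refine ⟨((e.equivFun.symm a : K) : X), SetLike.coe_mem _, ?_⟩
  intro z hz
  have hb := ha (e.equivFun ⟨z, hz⟩)
  have e1 : ((a - e.equivFun ⟨z, hz⟩ : Fin m → ℝ), (0:ℝ), (0:ℝ))
      = ((a, 0, 0) : (Fin m → ℝ) × ℝ × ℝ) - (e.equivFun ⟨z, hz⟩, 0, 0) := by
    simp only [Prod.mk_sub_mk, Prod.mk.injEq]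
    exact ⟨trivial, by ring, by ring⟩
  have e2 : ((-(e.equivFun ⟨z, hz⟩) : Fin m → ℝ), (0:ℝ), (1:ℝ))
      = ((0, 0, 1) : (Fin m → ℝ) × ℝ × ℝ) - (e.equivFun ⟨z, hz⟩, 0, 0) := by
    simp only [Prod.mk_sub_mk, Prod.mk.injEq]
    exact ⟨by simp, by ring, by ring⟩
  have hTz : Tmap (e.equivFun ⟨z, hz⟩, 0, 0) = z := by
    rw [hT, LinearEquiv.symm_apply_apply]
    simp
  have hTa : Tmap (a, 0, 0) = ((e.equivFun.symm a : K) : X) := by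
    rw [hT]
    simp
  rw [hgdef] at hb
  simp only at hb
  rw [e1, e2, map_sub, map_sub, hTz, hTa, ← hy'] at hb
  exact hb

theorem stmt_13 {X : Type*} [AddCommGroup X] [Module ℝ X]
    (γ : X → ℝ) (hγ : IsGauge γ) (m n : ℕ) (hmn : m ≤ n)
    (hdim : (n : Cardinal) < Module.rank ℝ X)
    (h : ∀ K : Submodule ℝ X, FiniteDimensional ℝ K → Module.finrank ℝ K = n →
      Coproximinal γ (K : Set X)) :
    ∀ K : Submodule ℝ X, FiniteDimensional ℝ K → Module.finrank ℝ K = m →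
      Coproximinal γ (K : Set X) := by
  have descend : ∀ d : ℕ, d ≤ n →
      ∀ K : Submodule ℝ X, FiniteDimensional ℝ K → Module.finrank ℝ K = n - d →
        Coproximinal γ (K : Set X) := by
    intro d
    induction d with
    | zero =>
      intro _ K hK hKr
      exact h K hK (by simpa using hKr)
    | succ d ih =>
      intro hd K hK hKr
      have hdn : d ≤ n := Nat.le_of_succ_le hd
      have hNd : ((n - d : ℕ) : Cardinal) < Module.rank ℝ X :=
        lt_of_le_of_lt (Nat.cast_le.mpr (Nat.sub_le n d)) hdim
      exact gauge_step γ hγ (n - d) hNd (fun L hL hLr => ih hdn L hL hLr) K hK (by omega)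
  intro K hK hKr
  exact descend (n - m) (Nat.sub_le n m) K hK (by omega)
end

section
/- Let (X, ⟨·,·⟩) be a real inner product space with induced norm ‖·‖, let K be a linear subspace of X, let y₀ ∈ X and z₀ ∈ K. Then z₀ is a best coapproximation of y₀ in K (i.e., ‖z₀ − z‖ ≤ ‖y₀ − z‖ for all z ∈ K) if and only if y₀ − z₀ is orthogonal to K, i.e., ⟨y₀ − z₀, z⟩ = 0 for all z ∈ K. -/
theorem stmt_16 {X : Type*} [NormedAddCommGroup X] [InnerProductSpace ℝ X]
    (K : Submodule ℝ X) (y₀ : X) (z₀ : X) (hz₀ : z₀ ∈ K) :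
    (∀ z ∈ K, ‖z₀ - z‖ ≤ ‖y₀ - z‖) ↔ (∀ z ∈ K, inner ℝ (y₀ - z₀) z = (0 : ℝ)) := by
  set v := y₀ - z₀ with hv
  constructor
  · intro h w hw
    by_contra ha
    set a : ℝ := inner ℝ v w with hA
    set t : ℝ := (‖v‖^2 + 1)/(2*a) with ht
    have hz : z₀ + t • w ∈ K := K.add_mem hz₀ (K.smul_mem t hw)
    have h1 := h _ hz
    have h2 : ‖z₀ - (z₀ + t • w)‖^2 ≤ ‖y₀ - (z₀ + t • w)‖^2 :=
      pow_le_pow_left₀ (norm_nonneg _) h1 2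
    have e1 : z₀ - (z₀ + t • w) = -(t • w) := by abel
    have e2 : y₀ - (z₀ + t • w) = v - t • w := by rw [hv]; abel
    rw [e1, e2, norm_neg, norm_sub_sq_real, real_inner_smul_right] at h2
    have h3 : 2*(t*a) ≤ ‖v‖^2 := by linarith
    have h4 : t*a = (‖v‖^2+1)/2 := by
      rw [ht]; field_simp
    rw [h4] at h3
    linarith
  · intro h z hz
    have h1 : inner ℝ v (z₀ - z) = (0:ℝ) := h _ (K.sub_mem hz₀ hz)
    have e : y₀ - z = v + (z₀ - z) := by rw [hv]; abel
    have h2 : ‖y₀ - z‖^2 = ‖v‖^2 + ‖z₀ - z‖^2 := by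
      rw [e, norm_add_sq_real, h1]; ring
    nlinarith [norm_nonneg (y₀ - z), norm_nonneg (z₀ - z), sq_nonneg ‖v‖]
end

section
/- Let (X, ⟨·,·⟩) be a real inner product space with induced norm ‖·‖. If every closed 1-codimensional linear subspace of X is coproximinal, then the Riesz representation theorem holds in X: for every continuous linear functional f : X → ℝ there exists x₀ ∈ X such that f(x) = ⟨x, x₀⟩ for all x ∈ X. -/
/-- A linear subspace is `1`-codimensional. -/
def CodimOne {X : Type*} [AddCommGroup X] [Module ℝ X] (K : Submodule ℝ X) : Prop :=
  ∃ v : X, v ∉ K ∧ ∀ x : X, ∃ k ∈ K, ∃ α : ℝ, x = k + α • v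

/-- `K` is coproximinal in a normed space: every point has a best coapproximation in `K`. -/
def CoproximinalNorm {X : Type*} [NormedAddCommGroup X] (K : Set X) : Prop :=
  ∀ y : X, ∃ x ∈ K, ∀ z ∈ K, ‖x - z‖ ≤ ‖y - z‖

theorem stmt_17 {X : Type*} [NormedAddCommGroup X] [InnerProductSpace ℝ X]
    (h : ∀ K : Submodule ℝ X, IsClosed (K : Set X) → CodimOne K →
      CoproximinalNorm (K : Set X)) :
    ∀ f : X →L[ℝ] ℝ, ∃ x₀ : X, ∀ x : X, f x = inner ℝ x x₀ := by
  intro f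
  by_cases hf : f = 0
  · exact ⟨0, fun x => by simp [hf]⟩
  obtain ⟨v, hv⟩ : ∃ v, f v ≠ 0 := by
    by_contra h'
    push_neg at h'
    exact hf (by ext x; simp [h' x])
  set K : Submodule ℝ X := LinearMap.ker (f : X →ₗ[ℝ] ℝ) with hK
  have hvK : v ∉ K := by simpa [hK, LinearMap.mem_ker] using hv
  have hKclosed : IsClosed (K : Set X) := ContinuousLinearMap.isClosed_ker f
  have hcodim : CodimOne K := by
    refine ⟨v, hvK, fun x => ⟨x - (f x / f v) • v, ?_, f x / f v, by abel⟩⟩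
    simp [hK, LinearMap.mem_ker, hv]
  obtain ⟨x, hxK, hx⟩ := h K hKclosed hcodim v
  set w : X := v - x with hw
  -- w is orthogonal to K
  have horth : ∀ u ∈ K, (inner ℝ w u : ℝ) = 0 := by
    intro u hu
    have key : ∀ t : ℝ, (0:ℝ) ≤ ‖w‖ ^ 2 + 2 * t * inner ℝ w u := by
      intro t
      have hz : x - t • u ∈ K := K.sub_mem hxK (K.smul_mem t hu)
      have := hx (x - t • u) hz
      have h1 : ‖x - (x - t • u)‖ = ‖t • u‖ := by congr 1; abel
      have h2 : v - (x - t • u) = w + t • u := by rw [hw]; abel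
      rw [h1, h2] at this
      have hsq : ‖t • u‖ ^ 2 ≤ ‖w + t • u‖ ^ 2 := by
        apply sq_le_sq' <;> nlinarith [norm_nonneg (t • u), norm_nonneg (w + t • u)]
      rw [@norm_add_sq_real] at hsq
      have : (inner ℝ w (t • u) : ℝ) = t * inner ℝ w u := real_inner_smul_right w u t
      nlinarith [hsq]
    by_contra hc
    have := key (-(‖w‖ ^ 2 + 1) / (2 * inner ℝ w u))
    have h2 : 2 * ((-(‖w‖ ^ 2 + 1) / (2 * (inner ℝ w u : ℝ)))) * inner ℝ w u
        = -(‖w‖ ^ 2 + 1) := by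
      field_simp
    nlinarith [this]
  have hfx : f x = 0 := by simpa [hK, LinearMap.mem_ker] using hxK
  have hfw : f w = f v := by simp [hw, hfx]
  have hwne : f w ≠ 0 := hfw ▸ hv
  have hwnz : w ≠ 0 := fun h0 => hwne (by simp [h0])
  have hnw : ‖w‖ ^ 2 ≠ 0 := pow_ne_zero 2 (norm_ne_zero_iff.mpr hwnz)
  refine ⟨(f w / ‖w‖ ^ 2) • w, fun x' => ?_⟩
  have huK : x' - (f x' / f w) • w ∈ K := by
    simp [hK, LinearMap.mem_ker, map_sub, map_smul, hwne]
  have hiu : (inner ℝ w (x' - (f x' / f w) • w) : ℝ) = 0 := horth _ huK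
  have hix : (inner ℝ x' w : ℝ) = (f x' / f w) * ‖w‖ ^ 2 := by
    have hsym := real_inner_comm w x'
    rw [inner_sub_right, real_inner_smul_right, real_inner_self_eq_norm_sq] at hiu
    rw [hsym]
    linarith
  rw [real_inner_smul_right, hix]
  field_simp
end

section
/- Let (X, ⟨·,·⟩) be a real inner product space with induced norm ‖·‖. Then X is complete with respect to ‖·‖ if and only if every closed 1-codimensional linear subspace of X is coproximinal. -/
set_option maxHeartbeats 1000000

open UniformSpace RealInnerProductSpace

theorem stmt_18 {X : Type*} [NormedAddCommGroup X] [InnerProductSpace ℝ X] :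
    CompleteSpace X ↔
      (∀ K : Submodule ℝ X, IsClosed (K : Set X) → CodimOne K →
        CoproximinalNorm (K : Set X)) := by
  constructor
  · intro hc K hK _ y
    haveI : CompleteSpace K := hK.completeSpace_coe
    set x : X := (K.orthogonalProjectionOnto y : X) with hx
    refine ⟨x, (K.orthogonalProjectionOnto y).2, ?_⟩
    intro z hz
    have h0 : ⟪y - x, x - z⟫ = 0 :=
      K.starProjection_inner_eq_zero y _ (K.sub_mem (K.orthogonalProjectionOnto y).2 hz)
    have hsq : ‖y - z‖ ^ 2 = ‖y - x‖ ^ 2 + ‖x - z‖ ^ 2 := by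
      have := norm_add_sq_real (y - x) (x - z)
      rw [h0] at this
      simpa [sub_add_sub_cancel] using this
    nlinarith [norm_nonneg (x - z), norm_nonneg (y - z), sq_nonneg ‖y - x‖,
      sq_nonneg (‖x - z‖ - ‖y - z‖), sq_nonneg (‖x - z‖ + ‖y - z‖)]
  · intro H
    by_contra hX
    -- pick a point of the completion not in the range of the embedding
    obtain ⟨h0, hh0⟩ : ∃ h0 : Completion X, h0 ∉ Set.range ((↑) : X → Completion X) := by
      by_contra hs
      push_neg at hs
      have hsurj : Function.Surjective ((↑) : X → Completion X) := fun w => hs w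
      have e : X ≃ᵢ Completion X :=
        { toEquiv := Equiv.ofBijective _ ⟨Completion.coe_injective X, hsurj⟩
          isometry_toFun := fun a b => by
            simp [Equiv.ofBijective, Completion.dist_eq] }
      exact hX (e.completeSpace_iff.2 inferInstance)
    -- the functional
    set f : X → ℝ := fun x => ⟪h0, (x : Completion X)⟫ with hf
    have hfadd : ∀ a b : X, f (a + b) = f a + f b := by
      intro a b; simp [hf, Completion.coe_add, inner_add_right]
    have hfsmul : ∀ (c : ℝ) (a : X), f (c • a) = c * f a := by
      intro c a; simp [hf, Completion.coe_smul, inner_smul_right]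
    have hfcont : Continuous f :=
      (Completion.continuous_inner.comp (continuous_const.prodMk (Completion.continuous_coe X)))
    -- f is nonzero
    obtain ⟨v, hv⟩ : ∃ v : X, f v ≠ 0 := by
      by_contra hz
      push_neg at hz
      have hall : ∀ w : Completion X, ⟪h0, w⟫ = 0 := by
        intro w
        refine Completion.induction_on w ?_ hz
        exact isClosed_eq (Completion.continuous_inner.comp
          (continuous_const.prodMk continuous_id)) continuous_const
      have : h0 = 0 := by
        have := hall h0
        rwa [inner_self_eq_zero] at this
      exact hh0 ⟨0, by rw [this]; exact Completion.coe_zero⟩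
    set flin : X →ₗ[ℝ] ℝ :=
      { toFun := f, map_add' := hfadd, map_smul' := fun c a => hfsmul c a } with hflin
    set K : Submodule ℝ X := LinearMap.ker flin with hK
    have hmem : ∀ u : X, u ∈ K ↔ f u = 0 := fun u => Iff.rfl
    have hclosed : IsClosed (K : Set X) := by
      have : (K : Set X) = f ⁻¹' {0} := rfl
      rw [this]
      exact isClosed_singleton.preimage hfcont
    have hdecomp : ∀ x : X, ∃ k ∈ K, ∃ α : ℝ, x = k + α • v := by
      intro x
      refine ⟨x - (f x / f v) • v, ?_, f x / f v, by abel⟩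
      rw [hmem]
      have h3 : f (x - (f x / f v) • v) = f x - (f x / f v) * f v := by
        have h1 := hfadd (x - (f x / f v) • v) ((f x / f v) • v)
        rw [sub_add_cancel] at h1
        rw [hfsmul] at h1
        linarith
      rw [h3]
      field_simp
      ring
    have hcodim : CodimOne K := ⟨v, by simpa [hmem] using hv, hdecomp⟩
    obtain ⟨x, hxK, hbest⟩ := H K hclosed hcodim v
    -- orthogonality: v - x ⟂ K
    set w : X := v - x with hw
    have horth : ∀ u ∈ K, ⟪w, u⟫ = 0 := by
      intro u hu
      by_contra hc0
      set c : ℝ := ⟪w, u⟫ with hc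
      set t : ℝ := -(‖w‖ ^ 2 + 1) / (2 * c) with ht
      have hz : x - t • u ∈ (K : Set X) := K.sub_mem hxK (K.smul_mem t hu)
      have hle := hbest (x - t • u) hz
      have h1 : x - (x - t • u) = t • u := by abel
      have h2 : v - (x - t • u) = w + t • u := by rw [hw]; abel
      rw [h1, h2] at hle
      have hsq : ‖t • u‖ ^ 2 ≤ ‖w + t • u‖ ^ 2 := by
        nlinarith [norm_nonneg (t • u), norm_nonneg (w + t • u)]
      rw [norm_add_sq_real] at hsq
      rw [inner_smul_right] at hsq
      have key : 0 ≤ ‖w‖ ^ 2 + 2 * (t * c) := by nlinarith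
      rw [ht] at key
      have : -(‖w‖ ^ 2 + 1) / (2 * c) * c = -(‖w‖ ^ 2 + 1) / 2 := by
        field_simp
      rw [this] at key
      nlinarith
    have hwne : w ≠ 0 := by
      intro h
      have : v = x := by rwa [hw, sub_eq_zero] at h
      rw [this] at hv
      exact hv ((hmem x).mp hxK)
    -- key identity: ⟪w, x'⟫ = c * f x' for all x'
    set c : ℝ := ⟪w, v⟫ / f v with hcdef
    have hkey : ∀ x' : X, ⟪w, x'⟫ = c * f x' := by
      intro x'
      obtain ⟨k, hk, α, hx'⟩ := hdecomp x'
      have h1 : ⟪w, x'⟫ = α * ⟪w, v⟫ := by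
        rw [hx', inner_add_right, inner_smul_right, horth k hk, zero_add]
      have h2 : f x' = α * f v := by
        rw [hx', hfadd, hfsmul, (hmem k).mp hk, zero_add]
      rw [h1, h2, hcdef]
      field_simp
    -- in the completion: (w : H) = c • h0
    have hwc : (w : Completion X) = c • h0 := by
      have hzero : ∀ z : Completion X, ⟪(w : Completion X) - c • h0, z⟫ = 0 := by
        intro z
        refine Completion.induction_on z ?_ ?_
        · exact isClosed_eq (Completion.continuous_inner.comp
            (continuous_const.prodMk continuous_id)) continuous_const
        · intro a
          rw [inner_sub_left, inner_smul_left]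
          have : ⟪(w : Completion X), (a : Completion X)⟫ = ⟪w, a⟫ :=
            Completion.inner_coe w a
          rw [this, hkey a]
          simp only [hf, RCLike.star_def, conj_trivial]
          ring
      have := hzero ((w : Completion X) - c • h0)
      rw [inner_self_eq_zero, sub_eq_zero] at this
      exact this
    have hcne : c ≠ 0 := by
      intro h
      rw [h, zero_smul] at hwc
      exact hwne (Completion.coe_injective X (by rw [hwc, Completion.coe_zero]))
    apply hh0
    refine ⟨c⁻¹ • w, ?_⟩
    rw [Completion.coe_smul, hwc, smul_smul, inv_mul_cancel₀ hcne, one_smul]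
end

section
/- Let (X, ⟨·,·⟩) be a real inner product space with induced norm ‖·‖ in which the Riesz representation theorem holds, i.e., for every continuous linear functional f : X → ℝ there exists x₀ ∈ X with f(x) = ⟨x, x₀⟩ for all x ∈ X. Then X is complete with respect to ‖·‖. -/
open UniformSpace

theorem stmt_19 {X : Type*} [NormedAddCommGroup X] [InnerProductSpace ℝ X]
    (hRiesz : ∀ f : X →L[ℝ] ℝ, ∃ x₀ : X, ∀ x : X, f x = inner ℝ x x₀) :
    CompleteSpace X := by
  set ι : X →ₗᵢ[ℝ] Completion X := Completion.toComplₗᵢ with hι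
  have hsurj : Function.Surjective ι := by
    intro y
    let f : X →L[ℝ] ℝ := (innerSL ℝ y).comp ι.toContinuousLinearMap
    obtain ⟨x₀, hx₀⟩ := hRiesz f
    refine ⟨x₀, ?_⟩
    have hz : ∀ x : X, (inner ℝ (ι x) (ι x₀ - y) : ℝ) = 0 := by
      intro x
      have h1 : (inner ℝ (ι x) (ι x₀) : ℝ) = inner ℝ x x₀ := Completion.inner_coe x x₀
      have h2 : f x = inner ℝ (ι x) y := by
        simp [f, real_inner_comm]
      rw [inner_sub_right, h1, ← hx₀ x, h2, sub_self]
    have hfun : (fun z : Completion X => (inner ℝ z (ι x₀ - y) : ℝ)) = fun _ => 0 := by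
      refine Completion.denseRange_coe.equalizer ?_ continuous_const ?_
      · exact Continuous.inner continuous_id continuous_const
      · funext x
        exact hz x
    have h0 := congrFun hfun (ι x₀ - y)
    have : ι x₀ - y = 0 := by rwa [inner_self_eq_zero] at h0
    exact (sub_eq_zero.mp this).symm ▸ rfl
  exact (LinearIsometryEquiv.ofSurjective ι hsurj).toIsometryEquiv.completeSpace
end
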